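/- arXiv:1001.0094 — 4 statements merged into one kernel-verified Lean document; each statement's English description precedes it below -/
import Mathlib

section
/- Let X and Y be Polish spaces, (Ω,F,P) a probability space, μ a probability kernel from Ω to X, ν a probability kernel from Ω to Y, and c : Ω×X×Y → [0,∞) a function such that for each ω the map (x,y) ↦ c(ω,x,y) is continuous, for each (x,y) the map ω ↦ c(ω,x,y) is F-measurable, and E ∫_{X×Y} c(ω,x,y) μ_ω(dx) ν_ω(dy) < +∞. If π ∈ K(μ,ν) is a stochastic optimal transference plan, i.e. E ∫ c(ω,x,y) π_ω(dx,dy) = C^stoch(c,μ,ν), then for P-almost all ω ∈ Ω the support of π_ω is a c(ω,·,·)-cyclically monotone subset of X×Y. -/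
open MeasureTheory ProbabilityTheory Filter ENNReal

/-- The stochastic Monge–Kantorovich cost: the infimum, over all probability kernels `π`
from `Ω` to `X × Y` whose marginal kernels are `μ` and `ν`, of
`E ∫ c(ω,x,y) π_ω(dx,dy)`. -/
noncomputable def stochCost {Ω X Y : Type*} [MeasurableSpace Ω] [MeasurableSpace X]
    [MeasurableSpace Y] (P : Measure Ω) (c : Ω → X → Y → ℝ)
    (μ : Kernel Ω X) (ν : Kernel Ω Y) : ℝ≥0∞ :=
  ⨅ π ∈ {π : Kernel Ω (X × Y) | IsMarkovKernel π ∧ π.fst = μ ∧ π.snd = ν},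
    ∫⁻ ω, ∫⁻ q, ENNReal.ofReal (c ω q.1 q.2) ∂(π ω) ∂P

/-- A set `Γ ⊆ X × Y` is `c`-cyclically monotone if for any finite family
`(x₁,y₁),…,(x_N,y_N)` of points of `Γ`, `∑ c(xᵢ,yᵢ) ≤ ∑ c(xᵢ,y_{i+1})` (indices mod `N`). -/
def CyclicallyMonotone {X Y : Type*} (c : X → Y → ℝ) (Γ : Set (X × Y)) : Prop :=
  ∀ (N : ℕ) (f : Fin (N + 1) → X × Y), (∀ i, f i ∈ Γ) →
    ∑ i, c (f i).1 (f i).2 ≤ ∑ i, c (f i).1 (f (i + 1)).2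

/-- The topological support of a measure: all points whose every open neighbourhood has
positive measure. -/
def measureSupport {X : Type*} [TopologicalSpace X] [MeasurableSpace X]
    (m : Measure X) : Set X :=
  {x | ∀ U : Set X, IsOpen U → x ∈ U → m U ≠ 0}

namespace StochOTAux

variable {Ω X Y : Type*} [MeasurableSpace Ω] [MeasurableSpace X] [MeasurableSpace Y]

lemma map_finset_sum {α β : Type*} [MeasurableSpace α] [MeasurableSpace β] {ι : Type*}
    (s : Finset ι) (μ : ι → Measure α) {f : α → β} (hf : Measurable f) :
    (∑ i ∈ s, μ i).map f = ∑ i ∈ s, (μ i).map f := by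
  classical
  induction s using Finset.induction_on with
  | empty => simp
  | insert _ _ h ih => rw [Finset.sum_insert h, Finset.sum_insert h, Measure.map_add _ _ hf, ih]

section Pert

variable (κ : Kernel Ω (X × Y)) {N : ℕ} (B : Fin (N + 1) → Set (X × Y))
  (hB : ∀ i, MeasurableSet (B i))

/-- total mass of the `i`-th box -/
noncomputable def aF (i : Fin (N + 1)) (ω : Ω) : ℝ≥0∞ := κ ω (B i)

/-- minimum of the box masses -/
noncomputable def lamF (ω : Ω) : ℝ≥0∞ := ⨅ i, aF κ B i ω

lemma lamF_le (ω : Ω) (i : Fin (N + 1)) : lamF κ B ω ≤ aF κ B i ω := iInf_le _ i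

lemma lamF_ne_zero {ω : Ω} (h : ∀ i, aF κ B i ω ≠ 0) : lamF κ B ω ≠ 0 := by
  obtain ⟨j, hj⟩ := Finite.exists_min (fun i => aF κ B i ω)
  have : lamF κ B ω = aF κ B j ω := le_antisymm (iInf_le _ j) (le_iInf hj)
  rw [this]; exact h j

/-- the part subtracted from `κ ω` -/
noncomputable def subM (ω : Ω) : Measure (X × Y) :=
  (lamF κ B ω / (N + 1)) • ∑ i, (aF κ B i ω)⁻¹ • ((κ.restrict (hB i)) ω)

/-- the part added to `κ ω` -/
noncomputable def addM (ω : Ω) : Measure (X × Y) :=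
  (lamF κ B ω / (N + 1)) • ∑ i, ((aF κ B i ω)⁻¹ * (aF κ B (i + 1) ω)⁻¹) •
    ((((κ.restrict (hB i)).fst) ×ₖ ((κ.restrict (hB (i + 1))).snd)) ω)

variable [IsMarkovKernel κ]

lemma aF_ne_top (i : Fin (N + 1)) (ω : Ω) : aF κ B i ω ≠ ∞ :=
  (measure_lt_top _ _).ne

lemma lamF_le_one (ω : Ω) : lamF κ B ω ≤ 1 :=
  le_trans (lamF_le κ B ω 0) (prob_le_one)

omit [IsMarkovKernel κ] in
lemma subM_le (ω : Ω) : subM κ B hB ω ≤ κ ω := by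
  by_cases hz : ∀ i, aF κ B i ω ≠ 0
  · rw [Measure.le_iff]
    intro s hs
    have hres : ∀ i : Fin (N + 1), ((κ.restrict (hB i)) ω) s ≤ κ ω s := by
      intro i
      rw [Kernel.restrict_apply, Measure.restrict_apply hs]
      exact measure_mono Set.inter_subset_left
    have key : ∀ i : Fin (N + 1),
        (lamF κ B ω / (N + 1)) * ((aF κ B i ω)⁻¹ * ((κ.restrict (hB i)) ω) s)
          ≤ ((N : ℝ≥0∞) + 1)⁻¹ * κ ω s := by
      intro i
      have h1 : lamF κ B ω * (aF κ B i ω)⁻¹ ≤ 1 := by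
        calc lamF κ B ω * (aF κ B i ω)⁻¹ ≤ aF κ B i ω * (aF κ B i ω)⁻¹ :=
              mul_le_mul_left (lamF_le κ B ω i) _
          _ ≤ 1 := ENNReal.mul_inv_le_one _
      calc (lamF κ B ω / (N + 1)) * ((aF κ B i ω)⁻¹ * ((κ.restrict (hB i)) ω) s)
          = ((N : ℝ≥0∞) + 1)⁻¹ * ((lamF κ B ω * (aF κ B i ω)⁻¹) * ((κ.restrict (hB i)) ω) s) := by
            rw [ENNReal.div_eq_inv_mul]; ring
        _ ≤ ((N : ℝ≥0∞) + 1)⁻¹ * (1 * κ ω s) :=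
            mul_le_mul_right (mul_le_mul' h1 (hres i)) _
        _ = ((N : ℝ≥0∞) + 1)⁻¹ * κ ω s := by rw [one_mul]
    calc (subM κ B hB ω) s
        = (lamF κ B ω / (N + 1)) * ∑ i, (aF κ B i ω)⁻¹ * ((κ.restrict (hB i)) ω) s := by
          simp [subM, Measure.smul_apply, Measure.finset_sum_apply, smul_eq_mul]
      _ = ∑ i, (lamF κ B ω / (N + 1)) * ((aF κ B i ω)⁻¹ * ((κ.restrict (hB i)) ω) s) := by
          rw [Finset.mul_sum]
      _ ≤ ∑ _i : Fin (N + 1), ((N : ℝ≥0∞) + 1)⁻¹ * κ ω s := Finset.sum_le_sum fun i _ => key i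
      _ = (N + 1 : ℝ≥0∞) * (((N : ℝ≥0∞) + 1)⁻¹ * κ ω s) := by
          rw [Finset.sum_const, Finset.card_univ, Fintype.card_fin, nsmul_eq_mul]
          push_cast
          ring
      _ ≤ κ ω s := by
          rw [← mul_assoc, ENNReal.mul_inv_cancel (by simp) (by simp), one_mul]
  · push_neg at hz
    obtain ⟨i, hi⟩ := hz
    have hlam : lamF κ B ω = 0 := le_antisymm (hi ▸ lamF_le κ B ω i) zero_le
    have : subM κ B hB ω = 0 := by
      simp [subM, hlam, ENNReal.zero_div]
    rw [this]; exact Measure.zero_le _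

lemma isFiniteMeasure_subM (ω : Ω) : IsFiniteMeasure (subM κ B hB ω) :=
  ⟨lt_of_le_of_lt (Measure.le_iff'.1 (subM_le κ B hB ω) Set.univ) (measure_lt_top _ _)⟩

/-- the product kernel piece -/
noncomputable def prK (i : Fin (N + 1)) : Kernel Ω (X × Y) :=
  ((κ.restrict (hB i)).fst) ×ₖ ((κ.restrict (hB (i + 1))).snd)

/-- the perturbed measure -/
noncomputable def pertM (ω : Ω) : Measure (X × Y) :=
  (κ ω - subM κ B hB ω) + addM κ B hB ω

omit [IsMarkovKernel κ] in
lemma addM_eq (ω : Ω) : addM κ B hB ω =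
    (lamF κ B ω / (N + 1)) • ∑ i, ((aF κ B i ω)⁻¹ * (aF κ B (i + 1) ω)⁻¹) • (prK κ B hB i ω) :=
  rfl

lemma pertM_apply (ω : Ω) {s : Set (X × Y)} (hs : MeasurableSet s) :
    pertM κ B hB ω s = (κ ω s - subM κ B hB ω s) + addM κ B hB ω s := by
  haveI := isFiniteMeasure_subM κ B hB ω
  rw [pertM, Measure.add_apply, Measure.sub_apply hs (subM_le κ B hB ω)]

omit [IsMarkovKernel κ] in
include hB in
lemma measurable_aF (i : Fin (N + 1)) : Measurable (aF κ B i) :=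
  Kernel.measurable_coe κ (hB i)

omit [IsMarkovKernel κ] in
include hB in
lemma measurable_lamF : Measurable (lamF κ B) :=
  Measurable.iInf fun i => measurable_aF κ B hB i

lemma measurable_pertM_apply {s : Set (X × Y)} (hs : MeasurableSet s) :
    Measurable fun ω => pertM κ B hB ω s := by
  have h1 : (fun ω => pertM κ B hB ω s) = fun ω =>
      (κ ω s - subM κ B hB ω s) + addM κ B hB ω s := by
    funext ω; exact pertM_apply κ B hB ω hs
  rw [h1]
  have hr : Measurable fun ω => lamF κ B ω / ((N : ℝ≥0∞) + 1) := by
    simp_rw [div_eq_mul_inv]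
    exact (measurable_lamF κ B hB).mul_const _
  have hsub : Measurable fun ω => subM κ B hB ω s := by
    have : (fun ω => subM κ B hB ω s) = fun ω =>
        (lamF κ B ω / (N + 1)) * ∑ i, (aF κ B i ω)⁻¹ * ((κ.restrict (hB i)) ω s) := by
      funext ω
      simp [subM, Measure.smul_apply, Measure.finset_sum_apply, smul_eq_mul]
    rw [this]
    exact hr.mul <| Finset.measurable_sum _ fun i _ =>
      ((measurable_aF κ B hB i).inv).mul (Kernel.measurable_coe _ hs)
  have hadd : Measurable fun ω => addM κ B hB ω s := by
    have : (fun ω => addM κ B hB ω s) = fun ω =>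
        (lamF κ B ω / (N + 1)) * ∑ i,
          ((aF κ B i ω)⁻¹ * (aF κ B (i + 1) ω)⁻¹) * (prK κ B hB i ω s) := by
      funext ω
      simp [addM_eq, Measure.smul_apply, Measure.finset_sum_apply, smul_eq_mul]
    rw [this]
    exact hr.mul <| Finset.measurable_sum _ fun i _ =>
      (((measurable_aF κ B hB i).inv).mul ((measurable_aF κ B hB (i + 1)).inv)).mul
        (Kernel.measurable_coe _ hs)
  exact ((Kernel.measurable_coe κ hs).sub hsub).add hadd

open Classical in
/-- The perturbed kernel: replace `κ ω` by `pertM` on `A`. -/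
noncomputable def pertK (A : Set Ω) (hA : MeasurableSet A) : Kernel Ω (X × Y) where
  toFun ω := if ω ∈ A then pertM κ B hB ω else κ ω
  measurable' := by
    apply Measure.measurable_of_measurable_coe
    intro s hs
    have : (fun ω => (if ω ∈ A then pertM κ B hB ω else κ ω) s)
        = fun ω => if ω ∈ A then pertM κ B hB ω s else κ ω s := by
      funext ω; split_ifs <;> rfl
    rw [this]
    exact Measurable.ite hA (measurable_pertM_apply κ B hB hs) (Kernel.measurable_coe κ hs)

open Classical in
lemma pertK_apply (A : Set Ω) (hA : MeasurableSet A) (ω : Ω) :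
    pertK κ B hB A hA ω = if ω ∈ A then pertM κ B hB ω else κ ω := rfl

lemma pertK_apply_of_mem {A : Set Ω} (hA : MeasurableSet A) {ω : Ω} (hω : ω ∈ A) :
    pertK κ B hB A hA ω = pertM κ B hB ω := by
  rw [pertK_apply]; simp [hω]

lemma pertK_apply_of_not_mem {A : Set Ω} (hA : MeasurableSet A) {ω : Ω} (hω : ω ∉ A) :
    pertK κ B hB A hA ω = κ ω := by
  rw [pertK_apply]; simp [hω]

-- mass computations
lemma subM_univ {ω : Ω} (hpos : ∀ i, aF κ B i ω ≠ 0) :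
    subM κ B hB ω Set.univ = lamF κ B ω := by
  have : ∀ i : Fin (N + 1), (aF κ B i ω)⁻¹ * ((κ.restrict (hB i)) ω Set.univ) = 1 := by
    intro i
    rw [Kernel.restrict_apply, Measure.restrict_apply_univ]
    exact ENNReal.inv_mul_cancel (hpos i) (aF_ne_top κ B i ω)
  calc subM κ B hB ω Set.univ
      = (lamF κ B ω / (N + 1)) * ∑ i, (aF κ B i ω)⁻¹ * ((κ.restrict (hB i)) ω Set.univ) := by
        simp [subM, Measure.smul_apply, Measure.finset_sum_apply, smul_eq_mul]
    _ = (lamF κ B ω / (N + 1)) * (N + 1) := by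
        rw [Finset.sum_congr rfl fun i _ => this i]
        simp [Finset.sum_const, Finset.card_univ, nsmul_eq_mul]
    _ = lamF κ B ω := ENNReal.div_mul_cancel (by simp) (by simp)

lemma prK_apply (i : Fin (N + 1)) (ω : Ω) :
    prK κ B hB i ω = (((κ ω).restrict (B i)).map Prod.fst).prod
      (((κ ω).restrict (B (i + 1))).map Prod.snd) := by
  rw [prK, Kernel.prod_apply, Kernel.fst_apply, Kernel.snd_apply, Kernel.restrict_apply,
    Kernel.restrict_apply]

lemma fstPart_univ (i : Fin (N + 1)) (ω : Ω) :
    (((κ ω).restrict (B i)).map Prod.fst) Set.univ = aF κ B i ω := by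
  rw [Measure.map_apply measurable_fst MeasurableSet.univ, Set.preimage_univ,
    Measure.restrict_apply_univ]
  rfl

lemma sndPart_univ (i : Fin (N + 1)) (ω : Ω) :
    (((κ ω).restrict (B i)).map Prod.snd) Set.univ = aF κ B i ω := by
  rw [Measure.map_apply measurable_snd MeasurableSet.univ, Set.preimage_univ,
    Measure.restrict_apply_univ]
  rfl

lemma prK_univ (i : Fin (N + 1)) (ω : Ω) :
    prK κ B hB i ω Set.univ = aF κ B i ω * aF κ B (i + 1) ω := by
  rw [prK_apply, ← Set.univ_prod_univ, Measure.prod_prod, fstPart_univ, sndPart_univ]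

lemma addM_univ {ω : Ω} (hpos : ∀ i, aF κ B i ω ≠ 0) :
    addM κ B hB ω Set.univ = lamF κ B ω := by
  have : ∀ i : Fin (N + 1),
      ((aF κ B i ω)⁻¹ * (aF κ B (i + 1) ω)⁻¹) * (prK κ B hB i ω Set.univ) = 1 := by
    intro i
    rw [prK_univ]
    calc (aF κ B i ω)⁻¹ * (aF κ B (i + 1) ω)⁻¹ * (aF κ B i ω * aF κ B (i + 1) ω)
        = ((aF κ B i ω)⁻¹ * aF κ B i ω) * ((aF κ B (i + 1) ω)⁻¹ * aF κ B (i + 1) ω) := by ring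
      _ = 1 := by
          rw [ENNReal.inv_mul_cancel (hpos i) (aF_ne_top κ B i ω),
            ENNReal.inv_mul_cancel (hpos (i + 1)) (aF_ne_top κ B (i + 1) ω), one_mul]
  calc addM κ B hB ω Set.univ
      = (lamF κ B ω / (N + 1)) * ∑ i,
          ((aF κ B i ω)⁻¹ * (aF κ B (i + 1) ω)⁻¹) * (prK κ B hB i ω Set.univ) := by
        simp [addM_eq, Measure.smul_apply, Measure.finset_sum_apply, smul_eq_mul]
    _ = (lamF κ B ω / (N + 1)) * (N + 1) := by
        rw [Finset.sum_congr rfl fun i _ => this i]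
        simp [Finset.sum_const, Finset.card_univ, nsmul_eq_mul]
    _ = lamF κ B ω := ENNReal.div_mul_cancel (by simp) (by simp)

lemma pertM_univ {ω : Ω} (hpos : ∀ i, aF κ B i ω ≠ 0) :
    pertM κ B hB ω Set.univ = 1 := by
  rw [pertM_apply κ B hB ω MeasurableSet.univ, subM_univ κ B hB hpos, addM_univ κ B hB hpos,
    measure_univ, tsub_add_cancel_of_le (lamF_le_one κ B ω)]

lemma isMarkovKernel_pertK {A : Set Ω} (hA : MeasurableSet A)
    (hApos : ∀ ω ∈ A, ∀ i, aF κ B i ω ≠ 0) :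
    IsMarkovKernel (pertK κ B hB A hA) := by
  constructor
  intro ω
  by_cases hω : ω ∈ A
  · rw [pertK_apply_of_mem κ B hB hA hω]
    exact ⟨pertM_univ κ B hB (hApos ω hω)⟩
  · rw [pertK_apply_of_not_mem κ B hB hA hω]
    infer_instance

-- marginals
lemma map_fst_subM {ω : Ω} :
    (subM κ B hB ω).map Prod.fst = (lamF κ B ω / (N + 1)) •
      ∑ i, (aF κ B i ω)⁻¹ • (((κ ω).restrict (B i)).map Prod.fst) := by
  rw [subM, Measure.map_smul, map_finset_sum _ _ measurable_fst]
  congr 1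
  refine Finset.sum_congr rfl fun i _ => ?_
  rw [Measure.map_smul, Kernel.restrict_apply]

lemma map_snd_subM {ω : Ω} :
    (subM κ B hB ω).map Prod.snd = (lamF κ B ω / (N + 1)) •
      ∑ i, (aF κ B i ω)⁻¹ • (((κ ω).restrict (B i)).map Prod.snd) := by
  rw [subM, Measure.map_smul, map_finset_sum _ _ measurable_snd]
  congr 1
  refine Finset.sum_congr rfl fun i _ => ?_
  rw [Measure.map_smul, Kernel.restrict_apply]

lemma map_fst_addM {ω : Ω} (hpos : ∀ i, aF κ B i ω ≠ 0) :
    (addM κ B hB ω).map Prod.fst = (subM κ B hB ω).map Prod.fst := by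
  rw [map_fst_subM, addM_eq, Measure.map_smul, map_finset_sum _ _ measurable_fst]
  congr 1
  refine Finset.sum_congr rfl fun i _ => ?_
  rw [Measure.map_smul, prK_apply]
  haveI : IsFiniteMeasure (((κ ω).restrict (B (i + 1))).map Prod.snd) := by
    constructor
    rw [sndPart_univ]
    exact (aF_ne_top κ B (i + 1) ω).lt_top
  rw [Measure.map_fst_prod, sndPart_univ, smul_smul]
  congr 1
  calc (aF κ B i ω)⁻¹ * (aF κ B (i + 1) ω)⁻¹ * aF κ B (i + 1) ω
      = (aF κ B i ω)⁻¹ * (aF κ B (i + 1) ω * (aF κ B (i + 1) ω)⁻¹) := by ring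
    _ = (aF κ B i ω)⁻¹ := by
        rw [ENNReal.mul_inv_cancel (hpos (i + 1)) (aF_ne_top κ B (i + 1) ω), mul_one]

lemma map_snd_addM {ω : Ω} (hpos : ∀ i, aF κ B i ω ≠ 0) :
    (addM κ B hB ω).map Prod.snd = (subM κ B hB ω).map Prod.snd := by
  rw [map_snd_subM, addM_eq, Measure.map_smul, map_finset_sum _ _ measurable_snd]
  congr 1
  rw [show ∑ i, (aF κ B i ω)⁻¹ • (((κ ω).restrict (B i)).map Prod.snd)
      = ∑ i, (aF κ B (i + 1) ω)⁻¹ • (((κ ω).restrict (B (i + 1))).map Prod.snd) from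
    Fintype.sum_equiv (Equiv.subRight (1 : Fin (N + 1))) _ _ (fun i => by
      rw [Equiv.subRight_apply, sub_add_cancel])]
  refine Finset.sum_congr rfl fun i _ => ?_
  rw [Measure.map_smul, prK_apply]
  haveI : IsFiniteMeasure (((κ ω).restrict (B i)).map Prod.fst) := by
    constructor
    rw [fstPart_univ]
    exact (aF_ne_top κ B i ω).lt_top
  rw [Measure.map_snd_prod, fstPart_univ, smul_smul]
  congr 1
  calc (aF κ B i ω)⁻¹ * (aF κ B (i + 1) ω)⁻¹ * aF κ B i ω
      = (aF κ B (i + 1) ω)⁻¹ * ((aF κ B i ω)⁻¹ * aF κ B i ω) := by ring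
    _ = (aF κ B (i + 1) ω)⁻¹ := by
        rw [ENNReal.inv_mul_cancel (hpos i) (aF_ne_top κ B i ω), mul_one]

lemma map_fst_pertM {ω : Ω} (hpos : ∀ i, aF κ B i ω ≠ 0) :
    (pertM κ B hB ω).map Prod.fst = (κ ω).map Prod.fst := by
  haveI := isFiniteMeasure_subM κ B hB ω
  conv_rhs => rw [← Measure.sub_add_cancel_of_le (subM_le κ B hB ω)]
  rw [pertM, Measure.map_add _ _ measurable_fst, Measure.map_add _ _ measurable_fst,
    map_fst_addM κ B hB hpos]

lemma map_snd_pertM {ω : Ω} (hpos : ∀ i, aF κ B i ω ≠ 0) :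
    (pertM κ B hB ω).map Prod.snd = (κ ω).map Prod.snd := by
  haveI := isFiniteMeasure_subM κ B hB ω
  conv_rhs => rw [← Measure.sub_add_cancel_of_le (subM_le κ B hB ω)]
  rw [pertM, Measure.map_add _ _ measurable_snd, Measure.map_add _ _ measurable_snd,
    map_snd_addM κ B hB hpos]

lemma fst_pertK {A : Set Ω} (hA : MeasurableSet A)
    (hApos : ∀ ω ∈ A, ∀ i, aF κ B i ω ≠ 0) :
    (pertK κ B hB A hA).fst = κ.fst := by
  ext ω s hs
  by_cases hω : ω ∈ A
  · rw [Kernel.fst_apply, Kernel.fst_apply, pertK_apply_of_mem κ B hB hA hω,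
      map_fst_pertM κ B hB (hApos ω hω)]
  · rw [Kernel.fst_apply, Kernel.fst_apply, pertK_apply_of_not_mem κ B hB hA hω]

lemma snd_pertK {A : Set Ω} (hA : MeasurableSet A)
    (hApos : ∀ ω ∈ A, ∀ i, aF κ B i ω ≠ 0) :
    (pertK κ B hB A hA).snd = κ.snd := by
  ext ω s hs
  by_cases hω : ω ∈ A
  · rw [Kernel.snd_apply, Kernel.snd_apply, pertK_apply_of_mem κ B hB hA hω,
      map_snd_pertM κ B hB (hApos ω hω)]
  · rw [Kernel.snd_apply, Kernel.snd_apply, pertK_apply_of_not_mem κ B hB hA hω]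

-- cost comparison
lemma lintegral_subM (ω : Ω) {f : X × Y → ℝ≥0∞} :
    ∫⁻ q, f q ∂(subM κ B hB ω)
      = (lamF κ B ω / (N + 1)) * ∑ i, (aF κ B i ω)⁻¹ * ∫⁻ q, f q ∂((κ ω).restrict (B i)) := by
  rw [subM, lintegral_smul_measure, lintegral_finset_sum_measure]
  congr 1
  refine Finset.sum_congr rfl fun i _ => ?_
  rw [lintegral_smul_measure, Kernel.restrict_apply, smul_eq_mul]

lemma lintegral_addM (ω : Ω) {f : X × Y → ℝ≥0∞} :
    ∫⁻ q, f q ∂(addM κ B hB ω)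
      = (lamF κ B ω / (N + 1)) * ∑ i, ((aF κ B i ω)⁻¹ * (aF κ B (i + 1) ω)⁻¹)
          * ∫⁻ q, f q ∂(prK κ B hB i ω) := by
  rw [addM_eq, lintegral_smul_measure, lintegral_finset_sum_measure]
  congr 1
  refine Finset.sum_congr rfl fun i _ => ?_
  rw [lintegral_smul_measure, smul_eq_mul]

lemma lintegral_pertM_lt {ω : Ω} (hpos : ∀ i, aF κ B i ω ≠ 0)
    {f : X × Y → ℝ≥0∞} (hf : Measurable f) (hfin : ∫⁻ q, f q ∂(κ ω) ≠ ∞)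
    {U : Fin (N + 1) → Set X} {V : Fin (N + 1) → Set Y}
    (hBUV : ∀ i, B i = U i ×ˢ V i) (hUm : ∀ i, MeasurableSet (U i))
    (hVm : ∀ i, MeasurableSet (V i))
    {s t : Fin (N + 1) → ℝ} (hs0 : ∀ i, 0 ≤ s i) (ht0 : ∀ i, 0 ≤ t i)
    (hst : ∑ i, s i < ∑ i, t i)
    (hlow : ∀ i, ∀ q ∈ B i, ENNReal.ofReal (t i) ≤ f q)
    (hup : ∀ i, ∀ x ∈ U i, ∀ y ∈ V (i + 1), f (x, y) ≤ ENNReal.ofReal (s i)) :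
    ∫⁻ q, f q ∂(pertM κ B hB ω) < ∫⁻ q, f q ∂(κ ω) := by
  haveI := isFiniteMeasure_subM κ B hB ω
  set r : ℝ≥0∞ := lamF κ B ω / (N + 1) with hr
  have hlam_ne_top : lamF κ B ω ≠ ∞ := (lt_of_le_of_lt (lamF_le_one κ B ω) one_lt_top).ne
  have hr0 : r ≠ 0 := by
    rw [hr, div_eq_mul_inv]
    simp [lamF_ne_zero κ B hpos]
  have hrtop : r ≠ ∞ := by
    rw [hr, div_eq_mul_inv]
    exact ENNReal.mul_ne_top hlam_ne_top (by simp)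
  -- lower bound on the subtracted cost
  have hsub_ge : r * ENNReal.ofReal (∑ i, t i) ≤ ∫⁻ q, f q ∂(subM κ B hB ω) := by
    rw [lintegral_subM]
    refine mul_le_mul_right ?_ r
    rw [ENNReal.ofReal_sum_of_nonneg fun i _ => ht0 i]
    refine Finset.sum_le_sum fun i _ => ?_
    have h1 : ENNReal.ofReal (t i) * aF κ B i ω ≤ ∫⁻ q, f q ∂((κ ω).restrict (B i)) := by
      have := setLIntegral_mono (μ := κ ω) (s := B i) hf (fun q hq => hlow i q hq)
      rw [setLIntegral_const] at this
      exact this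
    calc ENNReal.ofReal (t i)
        = (aF κ B i ω)⁻¹ * (ENNReal.ofReal (t i) * aF κ B i ω) := by
          rw [mul_comm (ENNReal.ofReal (t i)), ← mul_assoc,
            ENNReal.inv_mul_cancel (hpos i) (aF_ne_top κ B i ω), one_mul]
      _ ≤ (aF κ B i ω)⁻¹ * ∫⁻ q, f q ∂((κ ω).restrict (B i)) := mul_le_mul_right h1 _
  -- upper bound on the added cost
  have hadd_le : ∫⁻ q, f q ∂(addM κ B hB ω) ≤ r * ENNReal.ofReal (∑ i, s i) := by
    rw [lintegral_addM]
    refine mul_le_mul_right ?_ r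
    rw [ENNReal.ofReal_sum_of_nonneg fun i _ => hs0 i]
    refine Finset.sum_le_sum fun i _ => ?_
    -- the product measure is carried by U i ×ˢ V (i+1)
    have hF : (((κ ω).restrict (B i)).map Prod.fst) (U i)ᶜ = 0 := by
      rw [Measure.map_apply measurable_fst (hUm i).compl, Measure.restrict_apply
        (measurable_fst (hUm i).compl)]
      have : Prod.fst ⁻¹' (U i)ᶜ ∩ B i = ∅ := by
        ext q
        simp only [Set.mem_inter_iff, Set.mem_preimage, Set.mem_compl_iff,
          Set.mem_empty_iff_false, iff_false, not_and]
        intro hq hqB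
        exact hq ((hBUV i ▸ hqB).1)
      rw [this, measure_empty]
    have hS : (((κ ω).restrict (B (i + 1))).map Prod.snd) (V (i + 1))ᶜ = 0 := by
      rw [Measure.map_apply measurable_snd (hVm (i + 1)).compl, Measure.restrict_apply
        (measurable_snd (hVm (i + 1)).compl)]
      have : Prod.snd ⁻¹' (V (i + 1))ᶜ ∩ B (i + 1) = ∅ := by
        ext q
        simp only [Set.mem_inter_iff, Set.mem_preimage, Set.mem_compl_iff,
          Set.mem_empty_iff_false, iff_false, not_and]
        intro hq hqB
        exact hq ((hBUV (i + 1) ▸ hqB).2)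
      rw [this, measure_empty]
    have hnull : prK κ B hB i ω ((U i ×ˢ V (i + 1))ᶜ) = 0 := by
      rw [prK_apply, Set.compl_prod_eq_union]
      refine measure_union_null ?_ ?_
      · rw [Measure.prod_prod, hF, zero_mul]
      · rw [Measure.prod_prod, hS, mul_zero]
    have hae : ∀ᵐ q ∂(prK κ B hB i ω), f q ≤ ENNReal.ofReal (s i) := by
      rw [ae_iff]
      refine measure_mono_null ?_ hnull
      intro q hq
      simp only [Set.mem_setOf_eq, not_le] at hq
      simp only [Set.mem_compl_iff, Set.mem_prod, not_and]
      intro hq1 hq2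
      exact absurd (hup i q.1 hq1 q.2 hq2) (by simpa using hq.not_ge)
    have h2 : ∫⁻ q, f q ∂(prK κ B hB i ω)
        ≤ ENNReal.ofReal (s i) * (aF κ B i ω * aF κ B (i + 1) ω) := by
      calc ∫⁻ q, f q ∂(prK κ B hB i ω)
          ≤ ∫⁻ _, ENNReal.ofReal (s i) ∂(prK κ B hB i ω) := lintegral_mono_ae hae
        _ = ENNReal.ofReal (s i) * (aF κ B i ω * aF κ B (i + 1) ω) := by
            rw [lintegral_const, prK_univ]
    calc (aF κ B i ω)⁻¹ * (aF κ B (i + 1) ω)⁻¹ * ∫⁻ q, f q ∂(prK κ B hB i ω)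
        ≤ (aF κ B i ω)⁻¹ * (aF κ B (i + 1) ω)⁻¹
            * (ENNReal.ofReal (s i) * (aF κ B i ω * aF κ B (i + 1) ω)) :=
          mul_le_mul_right h2 _
      _ = ENNReal.ofReal (s i) * (((aF κ B i ω)⁻¹ * aF κ B i ω)
            * ((aF κ B (i + 1) ω)⁻¹ * aF κ B (i + 1) ω)) := by ring
      _ = ENNReal.ofReal (s i) := by
          rw [ENNReal.inv_mul_cancel (hpos i) (aF_ne_top κ B i ω),
            ENNReal.inv_mul_cancel (hpos (i + 1)) (aF_ne_top κ B (i + 1) ω), one_mul, mul_one]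
  -- decompositions
  have hdecomp : ∫⁻ q, f q ∂(κ ω)
      = ∫⁻ q, f q ∂(κ ω - subM κ B hB ω) + ∫⁻ q, f q ∂(subM κ B hB ω) := by
    conv_lhs => rw [← Measure.sub_add_cancel_of_le (subM_le κ B hB ω)]
    rw [lintegral_add_measure]
  have hdecomp' : ∫⁻ q, f q ∂(pertM κ B hB ω)
      = ∫⁻ q, f q ∂(κ ω - subM κ B hB ω) + ∫⁻ q, f q ∂(addM κ B hB ω) := by
    rw [pertM, lintegral_add_measure]
  have hbase : ∫⁻ q, f q ∂(κ ω - subM κ B hB ω) ≠ ∞ := by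
    refine (lt_of_le_of_lt (lintegral_mono' Measure.sub_le le_rfl) ?_).ne
    exact hfin.lt_top
  have hmid : r * ENNReal.ofReal (∑ i, s i) < r * ENNReal.ofReal (∑ i, t i) := by
    rw [ENNReal.mul_lt_mul_iff_right hr0 hrtop]
    exact ENNReal.ofReal_lt_ofReal_iff (lt_of_le_of_lt (Finset.sum_nonneg fun i _ => hs0 i)
      hst) |>.mpr hst
  calc ∫⁻ q, f q ∂(pertM κ B hB ω)
      = ∫⁻ q, f q ∂(κ ω - subM κ B hB ω) + ∫⁻ q, f q ∂(addM κ B hB ω) := hdecomp'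
    _ ≤ ∫⁻ q, f q ∂(κ ω - subM κ B hB ω) + r * ENNReal.ofReal (∑ i, s i) :=
        add_le_add_right hadd_le _
    _ < ∫⁻ q, f q ∂(κ ω - subM κ B hB ω) + r * ENNReal.ofReal (∑ i, t i) :=
        ENNReal.add_lt_add_left hbase hmid
    _ ≤ ∫⁻ q, f q ∂(κ ω - subM κ B hB ω) + ∫⁻ q, f q ∂(subM κ B hB ω) :=
        add_le_add_right hsub_ge _
    _ = ∫⁻ q, f q ∂(κ ω) := hdecomp.symm

end Pert

section Topology

open TopologicalSpace

lemma prod_subset_of_dense {X Y : Type*} [TopologicalSpace X] [TopologicalSpace Y]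
    {DX : Set X} {DY : Set Y} (hDX : Dense DX) (hDY : Dense DY)
    {U : Set X} {V : Set Y} {S : Set (X × Y)} (hU : IsOpen U) (hV : IsOpen V)
    (hS : IsClosed S) (h : (U ∩ DX) ×ˢ (V ∩ DY) ⊆ S) : U ×ˢ V ⊆ S := by
  intro q hq
  have h1 : q.1 ∈ closure (U ∩ DX) := hDX.open_subset_closure_inter hU hq.1
  have h2 : q.2 ∈ closure (V ∩ DY) := hDY.open_subset_closure_inter hV hq.2
  have hq' : q ∈ closure ((U ∩ DX) ×ˢ (V ∩ DY)) := by
    rw [closure_prod_eq]; exact ⟨h1, h2⟩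
  exact hS.closure_subset_iff.2 h hq'

lemma exists_bad_config {X Y : Type*} [TopologicalSpace X] [SecondCountableTopology X]
    [TopologicalSpace Y] [SecondCountableTopology Y] [MeasurableSpace X] [MeasurableSpace Y]
    (m : Measure (X × Y)) (g : X → Y → ℝ) (hg_nonneg : ∀ x y, 0 ≤ g x y)
    (hg : Continuous fun q : X × Y => g q.1 q.2)
    (hbad : ¬ CyclicallyMonotone g (measureSupport m)) :
    ∃ (N : ℕ) (U : Fin (N + 1) → Set X) (V : Fin (N + 1) → Set Y)
      (s t : Fin (N + 1) → ℚ),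
      (∀ i, U i ∈ countableBasis X) ∧ (∀ i, V i ∈ countableBasis Y) ∧
      ((∑ i, (s i : ℝ)) < ∑ i, (t i : ℝ)) ∧ (∀ i, 0 ≤ s i) ∧ (∀ i, 0 ≤ t i) ∧
      (∀ i, m (U i ×ˢ V i) ≠ 0) ∧
      (∀ i, ∀ x ∈ U i, ∀ y ∈ V i, (t i : ℝ) ≤ g x y) ∧
      (∀ i, ∀ x ∈ U i, ∀ y ∈ V (i + 1), g x y ≤ (s i : ℝ)) := by
  rw [CyclicallyMonotone] at hbad
  push_neg at hbad
  obtain ⟨N, p, hmem, hlt⟩ := hbad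

  set d : Fin (N + 1) → ℝ := fun i => g (p i).1 (p i).2 with hd
  set e : Fin (N + 1) → ℝ := fun i => g (p i).1 (p (i + 1)).2 with he
  have hlt' : ∑ i, e i < ∑ i, d i := hlt
  set K : ℝ := (N : ℝ) + 1 with hK
  have hKpos : 0 < K := by positivity
  set ε : ℝ := (∑ i, d i - ∑ i, e i) / (5 * K) with hε
  have hεpos : 0 < ε := by
    apply div_pos (by linarith) (by linarith)
  have hsum_de : ∑ i, d i - ∑ i, e i = 5 * K * ε := by
    rw [hε]; field_simp
  -- neighbourhoods from continuity
  have h1 : ∀ i : Fin (N + 1), ∃ (u : Set X) (v : Set Y), IsOpen u ∧ IsOpen v ∧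
      (p i).1 ∈ u ∧ (p i).2 ∈ v ∧ u ×ˢ v ⊆ {q : X × Y | d i - ε < g q.1 q.2} := by
    intro i
    have hopen : IsOpen {q : X × Y | d i - ε < g q.1 q.2} :=
      isOpen_lt continuous_const hg
    have hmem' : ((p i).1, (p i).2) ∈ {q : X × Y | d i - ε < g q.1 q.2} := by
      simp only [Set.mem_setOf_eq]; linarith
    obtain ⟨u, v, hu, hv, hx, hy, hsub⟩ := isOpen_prod_iff.1 hopen _ _ hmem'
    exact ⟨u, v, hu, hv, hx, hy, hsub⟩
  have h2 : ∀ i : Fin (N + 1), ∃ (u : Set X) (w : Set Y), IsOpen u ∧ IsOpen w ∧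
      (p i).1 ∈ u ∧ (p (i + 1)).2 ∈ w ∧ u ×ˢ w ⊆ {q : X × Y | g q.1 q.2 < e i + ε} := by
    intro i
    have hopen : IsOpen {q : X × Y | g q.1 q.2 < e i + ε} :=
      isOpen_lt hg continuous_const
    have hmem' : ((p i).1, (p (i + 1)).2) ∈ {q : X × Y | g q.1 q.2 < e i + ε} := by
      simp only [Set.mem_setOf_eq]; linarith
    obtain ⟨u, w, hu, hw, hx, hy, hsub⟩ := isOpen_prod_iff.1 hopen _ _ hmem'
    exact ⟨u, w, hu, hw, hx, hy, hsub⟩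
  choose u1 v1 hu1 hv1 hxu1 hyv1 hsub1 using h1
  choose u2 w2 hu2 hw2 hxu2 hyw2 hsub2 using h2
  -- basis refinements
  have hU : ∀ i : Fin (N + 1), ∃ U ∈ countableBasis X,
      (p i).1 ∈ U ∧ U ⊆ u1 i ∩ u2 i := by
    intro i
    obtain ⟨U, hUb, hxU, hUsub⟩ := (isBasis_countableBasis X).exists_subset_of_mem_open
      (Set.mem_inter (hxu1 i) (hxu2 i)) ((hu1 i).inter (hu2 i))
    exact ⟨U, hUb, hxU, hUsub⟩
  have hV : ∀ i : Fin (N + 1), ∃ V ∈ countableBasis Y,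
      (p i).2 ∈ V ∧ V ⊆ v1 i ∩ w2 (i - 1) := by
    intro i
    have hyw : (p i).2 ∈ w2 (i - 1) := by
      have := hyw2 (i - 1)
      rwa [sub_add_cancel] at this
    obtain ⟨V, hVb, hyV, hVsub⟩ := (isBasis_countableBasis Y).exists_subset_of_mem_open
      (Set.mem_inter (hyv1 i) hyw) ((hv1 i).inter (hw2 (i - 1)))
    exact ⟨V, hVb, hyV, hVsub⟩
  choose U hUb hxU hUsub using hU
  choose V hVb hyV hVsub using hV
  -- rationals
  have hq : ∀ i : Fin (N + 1), ∃ q : ℚ, d i - 2 * ε < (q : ℝ) ∧ (q : ℝ) < d i - ε := by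
    intro i; exact exists_rat_btwn (by linarith)
  have hs : ∀ i : Fin (N + 1), ∃ q : ℚ, e i + ε < (q : ℝ) ∧ (q : ℝ) < e i + 2 * ε := by
    intro i; exact exists_rat_btwn (by linarith)
  choose q hq1 hq2 using hq
  choose s hs1 hs2 using hs
  refine ⟨N, U, V, s, fun i => max (q i) 0, fun i => hUb i, fun i => hVb i, ?_, ?_, ?_, ?_, ?_, ?_⟩
  · -- sum comparison
    have hub : ∀ i : Fin (N + 1), (s i : ℝ) ≤ e i + 2 * ε := fun i => (hs2 i).le
    have hlb : ∀ i : Fin (N + 1), d i - 2 * ε ≤ ((max (q i) 0 : ℚ) : ℝ) := by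
      intro i
      push_cast
      exact le_trans (hq1 i).le (le_max_left _ _)
    have h1 : ∑ i, (s i : ℝ) ≤ ∑ i, (e i + 2 * ε) := Finset.sum_le_sum fun i _ => hub i
    have h2 : ∑ i, (d i - 2 * ε) ≤ ∑ i, ((max (q i) 0 : ℚ) : ℝ) :=
      Finset.sum_le_sum fun i _ => hlb i
    have hc1 : ∑ i, (e i + 2 * ε) = ∑ i, e i + K * (2 * ε) := by
      rw [Finset.sum_add_distrib, Finset.sum_const, Finset.card_univ, Fintype.card_fin,
        nsmul_eq_mul]
      push_cast [hK]; ring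
    have hc2 : ∑ i, (d i - 2 * ε) = ∑ i, d i - K * (2 * ε) := by
      rw [Finset.sum_sub_distrib, Finset.sum_const, Finset.card_univ, Fintype.card_fin,
        nsmul_eq_mul]
      push_cast [hK]; ring
    have hKε : 0 < K * ε := by positivity
    calc ∑ i, (s i : ℝ) ≤ ∑ i, e i + K * (2 * ε) := by rw [← hc1]; exact h1
      _ < ∑ i, d i - K * (2 * ε) := by nlinarith [hsum_de]
      _ ≤ ∑ i, ((max (q i) 0 : ℚ) : ℝ) := by rw [← hc2]; exact h2
  · -- s nonneg
    intro i
    have : (0 : ℝ) < (s i : ℝ) := lt_of_le_of_lt (by linarith [hg_nonneg (p i).1 (p (i + 1)).2]) (hs1 i)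
    exact_mod_cast this.le
  · -- t nonneg
    intro i; exact le_max_right _ _
  · -- positive mass
    intro i
    exact hmem i _ (((isBasis_countableBasis X).isOpen (hUb i)).prod
      ((isBasis_countableBasis Y).isOpen (hVb i))) ⟨hxU i, hyV i⟩
  · -- lower bound on boxes
    intro i x hx y hy
    have hg' : d i - ε < g x y := by
      have := hsub1 i (Set.mk_mem_prod ((hUsub i hx).1) ((hVsub i hy).1))
      simpa using this
    have h0 : 0 ≤ g x y := hg_nonneg x y
    have : ((max (q i) 0 : ℚ) : ℝ) = max ((q i : ℝ)) 0 := by push_cast; rfl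
    rw [this]
    exact max_le (by linarith [hq2 i]) h0
  · -- upper bound on shifted boxes
    intro i x hx y hy
    have hyw : y ∈ w2 i := by
      have := (hVsub (i + 1) hy).2
      rwa [add_sub_cancel_right] at this
    have hg' : g x y < e i + ε := by
      have := hsub2 i (Set.mk_mem_prod ((hUsub i hx).2) hyw)
      simpa using this
    linarith [hs1 i]

end Topology

end StochOTAux

/-- **Optimal plans have cyclically monotone supports.**
If `π ∈ K(μ,ν)` is a stochastic optimal transference plan, then for `P`-almost all `ω`
the support of `π_ω` is a `c(ω,·,·)`-cyclically monotone subset of `X × Y`. -/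
theorem support_cyclically_monotone_of_optimal
    {Ω X Y : Type*} [MeasurableSpace Ω]
    [TopologicalSpace X] [PolishSpace X] [MeasurableSpace X] [BorelSpace X]
    [TopologicalSpace Y] [PolishSpace Y] [MeasurableSpace Y] [BorelSpace Y]
    (P : Measure Ω) [IsProbabilityMeasure P]
    (μ : Kernel Ω X) [IsMarkovKernel μ] (ν : Kernel Ω Y) [IsMarkovKernel ν]
    (c : Ω → X → Y → ℝ)
    (hc_nonneg : ∀ ω x y, 0 ≤ c ω x y)
    (hc_cont : ∀ ω, Continuous (fun q : X × Y => c ω q.1 q.2))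
    (hc_meas : ∀ x y, Measurable (fun ω => c ω x y))
    (hint : ∫⁻ ω, ∫⁻ q, ENNReal.ofReal (c ω q.1 q.2) ∂((μ ω).prod (ν ω)) ∂P < ⊤)
    (π : Kernel Ω (X × Y)) [IsMarkovKernel π] (hπfst : π.fst = μ) (hπsnd : π.snd = ν)
    (hopt : ∫⁻ ω, ∫⁻ q, ENNReal.ofReal (c ω q.1 q.2) ∂(π ω) ∂P = stochCost P c μ ν) :
    ∀ᵐ ω ∂P, CyclicallyMonotone (c ω) (measureSupport (π ω)) := by
  classical
  open StochOTAux TopologicalSpace in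
  -- trivial case: empty base space
  rcases isEmpty_or_nonempty Ω with hΩ | hΩ
  · exact ae_of_all _ fun ω => (IsEmpty.false ω).elim
  obtain ⟨ω0⟩ := hΩ
  haveI hXY : Nonempty (X × Y) := by
    by_contra h
    rw [not_nonempty_iff] at h
    have h1 : (π ω0) Set.univ = 1 := measure_univ
    rw [Set.univ_eq_empty_iff.2 h, measure_empty] at h1
    exact zero_ne_one h1
  obtain ⟨⟨x0, y0⟩⟩ := hXY
  haveI : Nonempty X := ⟨x0⟩
  haveI : Nonempty Y := ⟨y0⟩
  -- dense sequences
  set dX : ℕ → X := denseSeq X with hdX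
  set dY : ℕ → Y := denseSeq Y with hdY
  have hdXdense : Dense (Set.range dX) := denseRange_denseSeq X
  have hdYdense : Dense (Set.range dY) := denseRange_denseSeq Y
  -- the cost of a kernel
  set C : Kernel Ω (X × Y) → Ω → ℝ≥0∞ :=
    fun κ ω => ∫⁻ q, ENNReal.ofReal (c ω q.1 q.2) ∂κ ω with hC
  have hjoint : Measurable fun p : Ω × (X × Y) => ENNReal.ofReal (c p.1 p.2.1 p.2.2) := by
    have h1 : Measurable (Function.uncurry fun (q : X × Y) (ω : Ω) =>
        ENNReal.ofReal (c ω q.1 q.2)) := by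
      refine measurable_uncurry_of_continuous_of_measurable ?_ ?_
      · intro ω
        exact ENNReal.continuous_ofReal.comp (hc_cont ω)
      · intro q
        exact ENNReal.measurable_ofReal.comp (hc_meas q.1 q.2)
    exact h1.comp measurable_swap
  have hCmeas : ∀ (κ : Kernel Ω (X × Y)), IsSFiniteKernel κ → Measurable (C κ) := by
    intro κ hκ
    exact Measurable.lintegral_kernel_prod_right' hjoint
  have hCπmeas : Measurable (C π) := hCmeas π inferInstance
  -- finiteness of the total cost of π
  have hπmem : π ∈ {π : Kernel Ω (X × Y) | IsMarkovKernel π ∧ π.fst = μ ∧ π.snd = ν} :=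
    ⟨inferInstance, hπfst, hπsnd⟩
  have hCπint : ∫⁻ ω, C π ω ∂P ≠ ∞ := by
    rw [hopt]
    refine (lt_of_le_of_lt ?_ hint).ne
    have hmem : (μ ×ₖ ν) ∈ {π : Kernel Ω (X × Y) | IsMarkovKernel π ∧ π.fst = μ ∧ π.snd = ν} :=
      ⟨inferInstance, Kernel.fst_prod μ ν, Kernel.snd_prod μ ν⟩
    refine le_trans (iInf₂_le (μ ×ₖ ν) hmem) ?_
    refine le_of_eq (lintegral_congr fun ω => ?_)
    rw [Kernel.prod_apply]
  have hae_fin : ∀ᵐ ω ∂P, C π ω ≠ ∞ :=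
    (ae_lt_top hCπmeas hCπint).mono fun ω h => h.ne
  have hPfin_null : P {ω | C π ω = ∞} = 0 := by
    have := hae_fin
    rw [ae_iff] at this
    simpa using this
  -- index type for bad configurations
  set Idx : Type _ :=
    Σ N : ℕ, (Fin (N + 1) → (countableBasis X × countableBasis Y × ℚ × ℚ)) with hIdx
  haveI : Countable Idx := by
    infer_instance
  -- components of an index
  let Uf : ∀ g : Idx, Fin (g.1 + 1) → Set X := fun g i => ((g.2 i).1 : Set X)
  let Vf : ∀ g : Idx, Fin (g.1 + 1) → Set Y := fun g i => ((g.2 i).2.1 : Set Y)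
  let sf : ∀ g : Idx, Fin (g.1 + 1) → ℚ := fun g i => (g.2 i).2.2.1
  let tf : ∀ g : Idx, Fin (g.1 + 1) → ℚ := fun g i => (g.2 i).2.2.2
  have hUopen : ∀ (g : Idx) (i : Fin (g.1 + 1)), IsOpen (Uf g i) := fun g i =>
    (isBasis_countableBasis X).isOpen (g.2 i).1.2
  have hVopen : ∀ (g : Idx) (i : Fin (g.1 + 1)), IsOpen (Vf g i) := fun g i =>
    (isBasis_countableBasis Y).isOpen (g.2 i).2.1.2
  -- "good" static conditions
  let Good : Idx → Prop := fun g =>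
    ((∑ i, ((sf g i : ℝ))) < ∑ i, ((tf g i : ℝ))) ∧ (∀ i, 0 ≤ sf g i) ∧ (∀ i, 0 ≤ tf g i)
  -- the bad event for an index
  let E : Idx → Set Ω := fun g =>
    {ω | ∀ i, π ω (Uf g i ×ˢ Vf g i) ≠ 0} ∩
    ({ω | ∀ (i : Fin (g.1 + 1)) (k l : ℕ), dX k ∈ Uf g i → dY l ∈ Vf g i →
        ((tf g i : ℝ) ≤ c ω (dX k) (dY l))} ∩
     {ω | ∀ (i : Fin (g.1 + 1)) (k l : ℕ), dX k ∈ Uf g i → dY l ∈ Vf g (i + 1) →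
        (c ω (dX k) (dY l) ≤ (sf g i : ℝ))})
  let A : Idx → Set Ω := fun g => if Good g then E g else ∅
  -- measurability of the events
  have hBm : ∀ (g : Idx) (i : Fin (g.1 + 1)), MeasurableSet (Uf g i ×ˢ Vf g i) := fun g i =>
    ((hUopen g i).prod (hVopen g i)).measurableSet
  have hEm : ∀ g, MeasurableSet (E g) := by
    intro g
    refine MeasurableSet.inter ?_ (MeasurableSet.inter ?_ ?_)
    · have : {ω | ∀ i, π ω (Uf g i ×ˢ Vf g i) ≠ 0}
          = ⋂ i, {ω | π ω (Uf g i ×ˢ Vf g i) = 0}ᶜ := by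
        ext ω; simp
      rw [this]
      exact MeasurableSet.iInter fun i =>
        ((Kernel.measurable_coe π (hBm g i)) (measurableSet_singleton 0)).compl
    · have : {ω | ∀ (i : Fin (g.1 + 1)) (k l : ℕ), dX k ∈ Uf g i → dY l ∈ Vf g i →
          ((tf g i : ℝ) ≤ c ω (dX k) (dY l))}
          = ⋂ i, ⋂ k, ⋂ l, {ω | dX k ∈ Uf g i → dY l ∈ Vf g i →
              ((tf g i : ℝ) ≤ c ω (dX k) (dY l))} := by
        ext ω; simp
      rw [this]
      refine MeasurableSet.iInter fun i => MeasurableSet.iInter fun k =>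
        MeasurableSet.iInter fun l => ?_
      by_cases h1 : dX k ∈ Uf g i
      · by_cases h2 : dY l ∈ Vf g i
        · simp only [h1, h2, forall_true_left]
          exact hc_meas (dX k) (dY l) measurableSet_Ici
        · simp [h2]
      · simp [h1]
    · have : {ω | ∀ (i : Fin (g.1 + 1)) (k l : ℕ), dX k ∈ Uf g i → dY l ∈ Vf g (i + 1) →
          (c ω (dX k) (dY l) ≤ (sf g i : ℝ))}
          = ⋂ i, ⋂ k, ⋂ l, {ω | dX k ∈ Uf g i → dY l ∈ Vf g (i + 1) →
              (c ω (dX k) (dY l) ≤ (sf g i : ℝ))} := by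
        ext ω; simp
      rw [this]
      refine MeasurableSet.iInter fun i => MeasurableSet.iInter fun k =>
        MeasurableSet.iInter fun l => ?_
      by_cases h1 : dX k ∈ Uf g i
      · by_cases h2 : dY l ∈ Vf g (i + 1)
        · simp only [h1, h2, forall_true_left]
          exact hc_meas (dX k) (dY l) measurableSet_Iic
        · simp [h2]
      · simp [h1]
  have hAm : ∀ g, MeasurableSet (A g) := by
    intro g
    show MeasurableSet (if Good g then E g else ∅)
    by_cases hg : Good g
    · rw [if_pos hg]; exact hEm g
    · rw [if_neg hg]; exact MeasurableSet.empty
  -- each event is null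
  have hnull : ∀ g, P (A g) = 0 := by
    intro g
    by_contra h0
    have hg : Good g := by
      by_contra hg
      refine h0 ?_
      show P (if Good g then E g else ∅) = 0
      rw [if_neg hg]; exact measure_empty
    have hAE : A g = E g := by
      show (if Good g then E g else ∅) = E g
      rw [if_pos hg]
    rw [hAE] at h0
    -- the competitor kernel
    set B : Fin (g.1 + 1) → Set (X × Y) := fun i => Uf g i ×ˢ Vf g i with hBdef
    have hB : ∀ i, MeasurableSet (B i) := hBm g
    have hApos : ∀ ω ∈ E g, ∀ i, StochOTAux.aF π B i ω ≠ 0 := fun ω hω i => hω.1 i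
    set ρ : Kernel Ω (X × Y) := StochOTAux.pertK π B hB (E g) (hEm g) with hρ
    haveI hρM : IsMarkovKernel ρ := StochOTAux.isMarkovKernel_pertK π B hB (hEm g) hApos
    have hρmem : ρ ∈ {π : Kernel Ω (X × Y) | IsMarkovKernel π ∧ π.fst = μ ∧ π.snd = ν} := by
      refine ⟨hρM, ?_, ?_⟩
      · rw [hρ, StochOTAux.fst_pertK π B hB (hEm g) hApos, hπfst]
      · rw [hρ, StochOTAux.snd_pertK π B hB (hEm g) hApos, hπsnd]
    -- pointwise comparison
    have hstrict : ∀ ω ∈ E g, C π ω ≠ ∞ → C ρ ω < C π ω := by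
      intro ω hω hfin
      have hρω : ρ ω = StochOTAux.pertM π B hB ω :=
        StochOTAux.pertK_apply_of_mem π B hB (hEm g) hω
      rw [hC]
      simp only
      rw [hρω]
      have hfmeas : Measurable fun q : X × Y => ENNReal.ofReal (c ω q.1 q.2) :=
        (ENNReal.continuous_ofReal.comp (hc_cont ω)).measurable
      -- full-box bounds from the dense-point bounds
      have hlowfull : ∀ (i : Fin (g.1 + 1)), ∀ q ∈ B i,
          ENNReal.ofReal ((tf g i : ℝ)) ≤ ENNReal.ofReal (c ω q.1 q.2) := by
        intro i q hq
        have hsubset : Uf g i ×ˢ Vf g i ⊆ {q : X × Y | (tf g i : ℝ) ≤ c ω q.1 q.2} := by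
          refine StochOTAux.prod_subset_of_dense hdXdense hdYdense (hUopen g i)
            (hVopen g i) ?_ ?_
          · exact isClosed_le continuous_const (hc_cont ω)
          · rintro ⟨x, y⟩ ⟨⟨hxU, k, rfl⟩, ⟨hyV, l, rfl⟩⟩
            exact hω.2.1 i k l hxU hyV
        exact ENNReal.ofReal_le_ofReal (hsubset hq)
      have hupfull : ∀ (i : Fin (g.1 + 1)), ∀ x ∈ Uf g i, ∀ y ∈ Vf g (i + 1),
          ENNReal.ofReal (c ω x y) ≤ ENNReal.ofReal ((sf g i : ℝ)) := by
        intro i x hx y hy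
        have hsubset : Uf g i ×ˢ Vf g (i + 1) ⊆ {q : X × Y | c ω q.1 q.2 ≤ (sf g i : ℝ)} := by
          refine StochOTAux.prod_subset_of_dense hdXdense hdYdense (hUopen g i)
            (hVopen g (i + 1)) ?_ ?_
          · exact isClosed_le (hc_cont ω) continuous_const
          · rintro ⟨x', y'⟩ ⟨⟨hxU, k, rfl⟩, ⟨hyV, l, rfl⟩⟩
            exact hω.2.2 i k l hxU hyV
        exact ENNReal.ofReal_le_ofReal (hsubset (Set.mk_mem_prod hx hy))
      refine StochOTAux.lintegral_pertM_lt π B hB (hApos ω hω) hfmeas hfin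
        (fun i => rfl) (fun i => (hUopen g i).measurableSet)
        (fun i => (hVopen g i).measurableSet)
        (s := fun i => ((sf g i : ℝ))) (t := fun i => ((tf g i : ℝ)))
        (fun i => by show (0 : ℝ) ≤ ((sf g i : ℝ)); exact_mod_cast hg.2.1 i)
        (fun i => by show (0 : ℝ) ≤ ((tf g i : ℝ)); exact_mod_cast hg.2.2 i)
        hg.1 hlowfull hupfull
    have hle : ∀ ω, C ρ ω ≤ C π ω := by
      intro ω
      by_cases hω : ω ∈ E g
      · by_cases hfin : C π ω = ∞
        · rw [hfin]; exact le_top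
        · exact (hstrict ω hω hfin).le
      · have : ρ ω = π ω := StochOTAux.pertK_apply_of_not_mem π B hB (hEm g) hω
        rw [hC]; simp only; rw [this]
    -- integral comparison
    have hCρmeas : Measurable (C ρ) := hCmeas ρ inferInstance
    have hCρint : ∫⁻ ω, C ρ ω ∂P ≠ ∞ :=
      (lt_of_le_of_lt (lintegral_mono hle) hCπint.lt_top).ne
    have hsfin : P (E g ∩ {ω | C π ω ≠ ∞}) ≠ 0 := by
      intro h0'
      have hsub : E g ⊆ (E g ∩ {ω | C π ω ≠ ∞}) ∪ {ω | C π ω = ∞} := by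
        intro ω hω
        by_cases hfin : C π ω = ∞
        · exact Or.inr hfin
        · exact Or.inl ⟨hω, hfin⟩
      have h1 : P (E g) ≤ P (E g ∩ {ω | C π ω ≠ ∞}) + P {ω | C π ω = ∞} :=
        le_trans (measure_mono hsub) (measure_union_le _ _)
      rw [h0', hPfin_null, add_zero] at h1
      exact h0 (le_antisymm h1 zero_le)
    have hlt : ∫⁻ ω, C ρ ω ∂P < ∫⁻ ω, C π ω ∂P := by
      refine lintegral_strict_mono_of_ae_le_of_ae_lt_on hCπmeas.aemeasurable hCρint
        (ae_of_all _ hle) hsfin (ae_of_all _ ?_)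
      rintro ω ⟨hω, hfin⟩
      exact hstrict ω hω hfin
    have hge : ∫⁻ ω, C π ω ∂P ≤ ∫⁻ ω, C ρ ω ∂P := by
      rw [hopt]
      exact iInf₂_le ρ hρmem
    exact absurd (lt_of_le_of_lt hge hlt) (lt_irrefl _)
  -- the set of bad ω is contained in the union of the events
  have hcover : {ω | ¬ CyclicallyMonotone (c ω) (measureSupport (π ω))} ⊆ ⋃ g, A g := by
    intro ω hω
    obtain ⟨N, U, V, s, t, hUb, hVb, hst, hs0, ht0, hmass, hlow, hup⟩ :=
      StochOTAux.exists_bad_config (π ω) (c ω) (hc_nonneg ω) (hc_cont ω) hω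
    refine Set.mem_iUnion.2 ⟨⟨N, fun i => (⟨U i, hUb i⟩, ⟨V i, hVb i⟩, s i, t i)⟩, ?_⟩
    have hgood : Good ⟨N, fun i => (⟨U i, hUb i⟩, ⟨V i, hVb i⟩, s i, t i)⟩ :=
      ⟨hst, hs0, ht0⟩
    simp only [A, if_pos hgood]
    refine ⟨fun i => hmass i, fun i k l hk hl => hlow i _ hk _ hl,
      fun i k l hk hl => hup i _ hk _ hl⟩
  have hbadnull : P {ω | ¬ CyclicallyMonotone (c ω) (measureSupport (π ω))} = 0 :=
    measure_mono_null hcover (measure_iUnion_null hnull)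
  rw [ae_iff]
  exact hbadnull
end

section
/- Let X and Y be Polish spaces, (Ω,F,P) a probability space, μ a probability kernel from Ω to X, ν a probability kernel from Ω to Y, and c : Ω×X×Y → [0,∞) a function such that for each ω the map (x,y) ↦ c(ω,x,y) is continuous, for each (x,y) the map ω ↦ c(ω,x,y) is F-measurable, and E ∫_{X×Y} c(ω,x,y) μ_ω(dx) ν_ω(dy) < +∞. Suppose π ∈ K(μ,ν) and there exist jointly measurable functions ψ on Ω×X and φ on Ω×Y with φ(ω,y) − ψ(ω,x) ≤ c(ω,x,y) for all (ω,x,y), such that for each ω the set Γ_ω := {(x,y) : φ(ω,y) − ψ(ω,x) = c(ω,x,y)} has π_ω-full measure. Then π is a stochastic optimal transference plan, i.e. E ∫ c(ω,x,y) π_ω(dx,dy) = C^stoch(c,μ,ν). -/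
open MeasureTheory ProbabilityTheory Filter ENNReal

namespace StochDualAux

noncomputable def cl (n : ℕ) (t : ℝ) : ℝ := max (min t n) (-(n : ℝ))

lemma cl_mono (n : ℕ) : Monotone (cl n) :=
  fun _ _ h => max_le_max (min_le_min h le_rfl) le_rfl

lemma abs_cl_le (n : ℕ) (t : ℝ) : |cl n t| ≤ n := by
  rw [abs_le]
  refine ⟨le_max_right _ _, max_le (le_trans (min_le_right _ _) le_rfl) ?_⟩
  exact neg_le_self (by positivity)

lemma cl_measurable (n : ℕ) : Measurable (cl n) :=
  (measurable_id.min measurable_const).max measurable_const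

lemma cl_le_cl_add (n : ℕ) {a b : ℝ} (h : b ≤ a) : cl n a ≤ cl n b + (a - b) := by
  have h0 : 0 ≤ a - b := by linarith
  have h1 : min a (n : ℝ) ≤ min b (n : ℝ) + (a - b) := by
    rcases le_total a (n : ℝ) with h2 | h2 <;> rcases le_total b (n : ℝ) with h3 | h3 <;>
      simp only [min_eq_left, min_eq_right, h2, h3] <;> linarith
  calc max (min a (n : ℝ)) (-(n : ℝ))
      ≤ max (min b (n : ℝ) + (a - b)) (-(n : ℝ) + (a - b)) :=
        max_le_max h1 (by linarith)
    _ = max (min b (n : ℝ)) (-(n : ℝ)) + (a - b) := by rw [max_add_add_right]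

lemma tendsto_cl (t : ℝ) : Tendsto (fun n : ℕ => cl n t) atTop (nhds t) := by
  have h : ∀ᶠ n : ℕ in atTop, cl n t = t := by
    filter_upwards [eventually_ge_atTop ⌈|t|⌉₊] with n hn
    have h2 : |t| ≤ (n : ℝ) := le_trans (Nat.le_ceil _) (by exact_mod_cast hn)
    rw [abs_le] at h2
    unfold cl
    rw [min_eq_left h2.2, max_eq_left h2.1]
  exact tendsto_const_nhds.congr' (h.mono fun n hn => hn.symm)

/-- Pointwise-in-ω comparison lemma. -/
lemma aux {X Y : Type*} [MeasurableSpace X] [MeasurableSpace Y]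
    (p p' : Measure (X × Y)) [IsProbabilityMeasure p] [IsProbabilityMeasure p']
    (hfst : p.map Prod.fst = p'.map Prod.fst) (hsnd : p.map Prod.snd = p'.map Prod.snd)
    (c : X → Y → ℝ) (hc0 : ∀ x y, 0 ≤ c x y)
    (hcm : Measurable (fun q : X × Y => c q.1 q.2))
    (ψ : X → ℝ) (φ : Y → ℝ) (hψ : Measurable ψ) (hφ : Measurable φ)
    (hineq : ∀ x y, φ y - ψ x ≤ c x y)
    (hfull : p {q : X × Y | φ q.2 - ψ q.1 = c q.1 q.2} = 1) :
    ∫⁻ q, ENNReal.ofReal (c q.1 q.2) ∂p ≤ ∫⁻ q, ENNReal.ofReal (c q.1 q.2) ∂p' := by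
  set S : Set (X × Y) := {q : X × Y | φ q.2 - ψ q.1 = c q.1 q.2} with hS
  have hSm : MeasurableSet S :=
    measurableSet_eq_fun ((hφ.comp measurable_snd).sub (hψ.comp measurable_fst)) hcm
  have hae : ∀ᵐ q ∂p, q ∈ S := by
    rw [ae_iff]
    have : p Sᶜ = 0 := by
      rw [Set.compl_def]
      have := measure_compl hSm (measure_ne_top p S)
      exact (by simpa [hfull, measure_univ] using this : p Sᶜ = 0)
    exact this
  -- g n : truncated dual difference
  set g : ℕ → X × Y → ℝ := fun n q => cl n (φ q.2) - cl n (ψ q.1) with hg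
  have hgm : ∀ n, Measurable (g n) := fun n =>
    ((cl_measurable n).comp (hφ.comp measurable_snd)).sub
      ((cl_measurable n).comp (hψ.comp measurable_fst))
  have hgle : ∀ n q, g n q ≤ c q.1 q.2 := by
    intro n q
    rcases le_total (ψ q.1) (φ q.2) with h | h
    · have := cl_le_cl_add n h
      have h2 := hineq q.1 q.2
      simp only [hg]; linarith
    · have := cl_mono n h
      have h2 := hc0 q.1 q.2
      simp only [hg]; linarith
  have hg0 : ∀ n, ∀ᵐ q ∂p, 0 ≤ g n q := by
    intro n
    filter_upwards [hae] with q hq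
    have hle : ψ q.1 ≤ φ q.2 := by
      have := hc0 q.1 q.2
      have hq' : φ q.2 - ψ q.1 = c q.1 q.2 := hq
      linarith
    have := cl_mono n hle
    simp only [hg]; linarith
  -- integrability of the pieces
  have int1 : ∀ (n : ℕ) (m : Measure (X × Y)) [IsProbabilityMeasure m],
      Integrable (fun q : X × Y => cl n (φ q.2)) m := by
    intro n m _
    refine Integrable.mono' (integrable_const (n : ℝ))
      ((cl_measurable n).comp (hφ.comp measurable_snd)).aestronglyMeasurable
      (ae_of_all _ fun q => ?_)
    simpa [Real.norm_eq_abs] using abs_cl_le n (φ q.2)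
  have int2 : ∀ (n : ℕ) (m : Measure (X × Y)) [IsProbabilityMeasure m],
      Integrable (fun q : X × Y => cl n (ψ q.1)) m := by
    intro n m _
    refine Integrable.mono' (integrable_const (n : ℝ))
      ((cl_measurable n).comp (hψ.comp measurable_fst)).aestronglyMeasurable
      (ae_of_all _ fun q => ?_)
    simpa [Real.norm_eq_abs] using abs_cl_le n (ψ q.1)
  have intg : ∀ (n : ℕ) (m : Measure (X × Y)) [IsProbabilityMeasure m],
      Integrable (g n) m := fun n m _ => (int1 n m).sub (int2 n m)
  -- integrals of g n agree under p and p'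
  have hIeq : ∀ n, ∫ q, g n q ∂p = ∫ q, g n q ∂p' := by
    intro n
    have e1 : ∀ (m : Measure (X × Y)) [IsProbabilityMeasure m],
        ∫ q, g n q ∂m = (∫ y, cl n (φ y) ∂(m.map Prod.snd))
          - ∫ x, cl n (ψ x) ∂(m.map Prod.fst) := by
      intro m _
      have m1 : ∫ y, cl n (φ y) ∂(m.map Prod.snd) = ∫ a : X × Y, cl n (φ a.2) ∂m :=
        integral_map measurable_snd.aemeasurable
          (by exact ((cl_measurable n).comp hφ).aestronglyMeasurable)
      have m2 : ∫ x, cl n (ψ x) ∂(m.map Prod.fst) = ∫ a : X × Y, cl n (ψ a.1) ∂m :=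
        integral_map measurable_fst.aemeasurable
          (by exact ((cl_measurable n).comp hψ).aestronglyMeasurable)
      rw [integral_sub (int1 n m) (int2 n m), m1, m2]
    rw [e1 p, e1 p', hfst, hsnd]
  -- per-n bound
  have key : ∀ n, ∫⁻ q, ENNReal.ofReal (g n q) ∂p ≤ ∫⁻ q, ENNReal.ofReal (c q.1 q.2) ∂p' := by
    intro n
    have h1 : ∫⁻ q, ENNReal.ofReal (g n q) ∂p = ENNReal.ofReal (∫ q, g n q ∂p) :=
      (ofReal_integral_eq_lintegral_ofReal (intg n p) (hg0 n)).symm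
    have h2 : ENNReal.ofReal (∫ q, g n q ∂p') ≤ ∫⁻ q, ENNReal.ofReal (g n q) ∂p' := by
      have hpos : Integrable (fun q => max (g n q) 0) p' := (intg n p').pos_part
      have hle : ∫ q, g n q ∂p' ≤ ∫ q, max (g n q) 0 ∂p' :=
        integral_mono (intg n p') hpos fun q => le_max_left _ _
      have heq : ENNReal.ofReal (∫ q, max (g n q) 0 ∂p')
          = ∫⁻ q, ENNReal.ofReal (max (g n q) 0) ∂p' :=
        ofReal_integral_eq_lintegral_ofReal hpos (ae_of_all _ fun q => le_max_right _ _)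
      have hofr : ∀ x : ℝ, ENNReal.ofReal (max x 0) = ENNReal.ofReal x := by
        intro x
        rcases le_total x 0 with h | h
        · rw [max_eq_right h, ENNReal.ofReal_zero, ENNReal.ofReal_eq_zero.mpr h]
        · rw [max_eq_left h]
      calc ENNReal.ofReal (∫ q, g n q ∂p') ≤ ENNReal.ofReal (∫ q, max (g n q) 0 ∂p') :=
            ENNReal.ofReal_le_ofReal hle
        _ = ∫⁻ q, ENNReal.ofReal (max (g n q) 0) ∂p' := heq
        _ = ∫⁻ q, ENNReal.ofReal (g n q) ∂p' := by simp_rw [hofr]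
    have h3 : ∫⁻ q, ENNReal.ofReal (g n q) ∂p' ≤ ∫⁻ q, ENNReal.ofReal (c q.1 q.2) ∂p' :=
      lintegral_mono fun q => ENNReal.ofReal_le_ofReal (hgle n q)
    rw [h1, hIeq n]
    exact le_trans h2 h3
  -- Fatou
  have hlim : ∫⁻ q, ENNReal.ofReal (c q.1 q.2) ∂p
      ≤ liminf (fun n => ∫⁻ q, ENNReal.ofReal (g n q) ∂p) atTop := by
    have : ∫⁻ q, ENNReal.ofReal (c q.1 q.2) ∂p
        = ∫⁻ q, liminf (fun n => ENNReal.ofReal (g n q)) atTop ∂p := by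
      refine lintegral_congr_ae ?_
      filter_upwards [hae] with q hq
      have hq' : φ q.2 - ψ q.1 = c q.1 q.2 := hq
      have ht : Tendsto (fun n : ℕ => g n q) atTop (nhds (c q.1 q.2)) := by
        have := ((tendsto_cl (φ q.2)).sub (tendsto_cl (ψ q.1)))
        rwa [hq'] at this
      have : Tendsto (fun n : ℕ => ENNReal.ofReal (g n q)) atTop
          (nhds (ENNReal.ofReal (c q.1 q.2))) :=
        (ENNReal.continuous_ofReal.tendsto _).comp ht
      exact (this.liminf_eq).symm
    rw [this]
    exact lintegral_liminf_le fun n => ENNReal.measurable_ofReal.comp (hgm n)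
  refine le_trans hlim ?_
  refine liminf_le_of_le ?_ ?_
  · isBoundedDefault
  · intro b hb
    obtain ⟨n, hn⟩ := hb.exists
    exact le_trans hn (key n)

end StochDualAux


/-- **A dual pair certifies optimality.** If `π ∈ K(μ,ν)` and there are jointly measurable
`ψ`, `φ` with `φ(ω,y) − ψ(ω,x) ≤ c(ω,x,y)` everywhere such that the contact set
`Γ_ω = {(x,y) : φ(ω,y) − ψ(ω,x) = c(ω,x,y)}` has full `π_ω`-measure for every `ω`, then
`π` is a stochastic optimal transference plan. -/
theorem optimal_of_dual_pair
    {Ω X Y : Type*} [MeasurableSpace Ω]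
    [TopologicalSpace X] [PolishSpace X] [MeasurableSpace X] [BorelSpace X]
    [TopologicalSpace Y] [PolishSpace Y] [MeasurableSpace Y] [BorelSpace Y]
    (P : Measure Ω) [IsProbabilityMeasure P]
    (μ : Kernel Ω X) [IsMarkovKernel μ] (ν : Kernel Ω Y) [IsMarkovKernel ν]
    (c : Ω → X → Y → ℝ)
    (hc_nonneg : ∀ ω x y, 0 ≤ c ω x y)
    (hc_cont : ∀ ω, Continuous (fun q : X × Y => c ω q.1 q.2))
    (hc_meas : ∀ x y, Measurable (fun ω => c ω x y))
    (hint : ∫⁻ ω, ∫⁻ q, ENNReal.ofReal (c ω q.1 q.2) ∂((μ ω).prod (ν ω)) ∂P < ⊤)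
    (π : Kernel Ω (X × Y)) [IsMarkovKernel π] (hπfst : π.fst = μ) (hπsnd : π.snd = ν)
    (ψ : Ω → X → ℝ) (φ : Ω → Y → ℝ)
    (hψ : Measurable (fun q : Ω × X => ψ q.1 q.2))
    (hφ : Measurable (fun q : Ω × Y => φ q.1 q.2))
    (hineq : ∀ ω x y, φ ω y - ψ ω x ≤ c ω x y)
    (hfull : ∀ ω, π ω {q : X × Y | φ ω q.2 - ψ ω q.1 = c ω q.1 q.2} = 1) :
    ∫⁻ ω, ∫⁻ q, ENNReal.ofReal (c ω q.1 q.2) ∂(π ω) ∂P = stochCost P c μ ν := by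
  refine le_antisymm ?_ (iInf₂_le π ⟨inferInstance, hπfst, hπsnd⟩)
  refine le_iInf₂ fun π' hπ' => ?_
  obtain ⟨hM, hf, hs⟩ := hπ'
  haveI := hM
  refine lintegral_mono fun ω => ?_
  refine StochDualAux.aux (π ω) (π' ω) ?_ ?_ (c ω) (hc_nonneg ω) (hc_cont ω).measurable
    (ψ ω) (φ ω) (hψ.comp measurable_prodMk_left) (hφ.comp measurable_prodMk_left)
    (hineq ω) (hfull ω)
  · rw [← Kernel.fst_apply, ← Kernel.fst_apply, hπfst, hf]
  · rw [← Kernel.snd_apply, ← Kernel.snd_apply, hπsnd, hs]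
end

section
/- Let X and Y be Polish spaces, (Ω,F,P) a probability space, μ a probability kernel from Ω to X, ν a probability kernel from Ω to Y, and c : Ω×X×Y → [0,∞) a function such that for each ω the map (x,y) ↦ c(ω,x,y) is continuous, for each (x,y) the map ω ↦ c(ω,x,y) is F-measurable, and E ∫_{X×Y} c(ω,x,y) μ_ω(dx) ν_ω(dy) < +∞. Let π be a stochastic optimal transference plan and let ψ, φ be jointly measurable functions with φ(ω,y) − ψ(ω,x) ≤ c(ω,x,y) everywhere, such that Γ_ω := {(x,y) : φ(ω,y) − ψ(ω,x) = c(ω,x,y)} has π_ω-full measure for each ω. Then for any other stochastic optimal transference plan π̃ ∈ K(μ,ν), for P-almost all ω the measure π̃_ω is concentrated on Γ_ω. -/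
open MeasureTheory ProbabilityTheory Filter ENNReal
open Topology

section aux

variable {Ω X Y : Type*} [MeasurableSpace Ω] [MeasurableSpace X] [MeasurableSpace Y]

lemma map_snd_compProd_aux (P : Measure Ω) [SFinite P] (κ : Kernel Ω (X × Y))
    [IsSFiniteKernel κ] :
    (P ⊗ₘ κ).map (fun p : Ω × (X × Y) => (p.1, p.2.2)) = P ⊗ₘ κ.snd := by
  ext s hs
  rw [Measure.map_apply (measurable_fst.prodMk measurable_snd.snd) hs,
    Measure.compProd_apply ((measurable_fst.prodMk measurable_snd.snd) hs),
    Measure.compProd_apply hs]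
  refine lintegral_congr fun ω => ?_
  rw [Kernel.snd_apply' _ _ (measurable_prodMk_left hs)]
  rfl

lemma map_fst_compProd_aux (P : Measure Ω) [SFinite P] (κ : Kernel Ω (X × Y))
    [IsSFiniteKernel κ] :
    (P ⊗ₘ κ).map (fun p : Ω × (X × Y) => (p.1, p.2.1)) = P ⊗ₘ κ.fst := by
  ext s hs
  rw [Measure.map_apply (measurable_fst.prodMk measurable_snd.fst) hs,
    Measure.compProd_apply ((measurable_fst.prodMk measurable_snd.fst) hs),
    Measure.compProd_apply hs]
  refine lintegral_congr fun ω => ?_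
  rw [Kernel.fst_apply' _ _ (measurable_prodMk_left hs)]
  rfl

end aux

noncomputable def Tr (n : ℕ) (t : ℝ) : ℝ := max (min t n) (-(n:ℝ))

lemma Tr_mono (n : ℕ) : Monotone (Tr n) :=
  (monotone_id.min monotone_const).max monotone_const

lemma Tr_continuous (n : ℕ) : Continuous (Tr n) :=
  (continuous_id.min continuous_const).max continuous_const

lemma Tr_abs_le (n : ℕ) (t : ℝ) : |Tr n t| ≤ n := by
  rw [abs_le]
  exact ⟨le_max_right _ _, max_le (min_le_right _ _)
    (le_trans (neg_nonpos.mpr (Nat.cast_nonneg n)) (Nat.cast_nonneg n))⟩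

lemma min_sub_min_le {a b n : ℝ} (h : b ≤ a) : min a n - min b n ≤ a - b := by
  rcases le_total a n with h1 | h1
  · rw [min_eq_left h1, min_eq_left (h.trans h1)]
  · rw [min_eq_right h1]
    rcases le_total b n with h2 | h2
    · rw [min_eq_left h2]; linarith
    · rw [min_eq_right h2]; linarith

lemma max_sub_max_le {a b m : ℝ} (h : b ≤ a) : max a m - max b m ≤ a - b := by
  rcases le_total m b with h2 | h2
  · rw [max_eq_left (h2.trans h), max_eq_left h2]
  · rw [max_eq_right h2]
    rcases le_total m a with h3 | h3
    · rw [max_eq_left h3]; linarith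
    · rw [max_eq_right h3]; linarith

lemma Tr_sub_le (n : ℕ) {a b : ℝ} (h : b ≤ a) : Tr n a - Tr n b ≤ a - b := by
  calc Tr n a - Tr n b ≤ min a n - min b n :=
        max_sub_max_le (min_le_min h le_rfl)
    _ ≤ a - b := min_sub_min_le h

lemma Tr_tendsto (t : ℝ) : Tendsto (fun n => Tr n t) atTop (𝓝 t) := by
  refine tendsto_atTop_of_eventually_const (i₀ := ⌈|t|⌉₊) fun n hn => ?_
  have h : |t| ≤ (n:ℝ) := le_trans (Nat.le_ceil _) (by exact_mod_cast hn)
  rw [abs_le] at h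
  unfold Tr
  rw [min_eq_left h.2, max_eq_left h.1]

/-- Difference of equally-truncated values is at most any upper bound of the
difference, provided the bound is nonnegative. -/
lemma Tr_sub_le_of_le {n : ℕ} {a b r : ℝ} (hr : 0 ≤ r) (h : a - b ≤ r) :
    Tr n a - Tr n b ≤ r := by
  rcases le_total a b with hab | hab
  · have := Tr_mono n hab
    linarith
  · exact le_trans (Tr_sub_le n hab) h



/-- **The contact set is independent of the optimal plan.**
Let `π` be a stochastic optimal transference plan and `ψ, φ` jointly measurable with
`φ(ω,y) − ψ(ω,x) ≤ c(ω,x,y)` everywhere, such that the contact set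
`Γ_ω = {(x,y) : φ(ω,y) − ψ(ω,x) = c(ω,x,y)}` has full `π_ω`-measure for every `ω`.
Then any other stochastic optimal transference plan `π̃ ∈ K(μ,ν)` is, for `P`-almost all
`ω`, concentrated on `Γ_ω`. -/
theorem other_optimal_plan_concentrated_on_contact_set
    {Ω X Y : Type*} [MeasurableSpace Ω]
    [TopologicalSpace X] [PolishSpace X] [MeasurableSpace X] [BorelSpace X]
    [TopologicalSpace Y] [PolishSpace Y] [MeasurableSpace Y] [BorelSpace Y]
    (P : Measure Ω) [IsProbabilityMeasure P]
    (μ : Kernel Ω X) [IsMarkovKernel μ] (ν : Kernel Ω Y) [IsMarkovKernel ν]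
    (c : Ω → X → Y → ℝ)
    (hc_nonneg : ∀ ω x y, 0 ≤ c ω x y)
    (hc_cont : ∀ ω, Continuous (fun q : X × Y => c ω q.1 q.2))
    (hc_meas : ∀ x y, Measurable (fun ω => c ω x y))
    (hint : ∫⁻ ω, ∫⁻ q, ENNReal.ofReal (c ω q.1 q.2) ∂((μ ω).prod (ν ω)) ∂P < ⊤)
    (π : Kernel Ω (X × Y)) [IsMarkovKernel π] (hπfst : π.fst = μ) (hπsnd : π.snd = ν)
    (hopt : ∫⁻ ω, ∫⁻ q, ENNReal.ofReal (c ω q.1 q.2) ∂(π ω) ∂P = stochCost P c μ ν)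
    (ψ : Ω → X → ℝ) (φ : Ω → Y → ℝ)
    (hψ : Measurable (fun q : Ω × X => ψ q.1 q.2))
    (hφ : Measurable (fun q : Ω × Y => φ q.1 q.2))
    (hineq : ∀ ω x y, φ ω y - ψ ω x ≤ c ω x y)
    (hfull : ∀ ω, π ω {q : X × Y | φ ω q.2 - ψ ω q.1 = c ω q.1 q.2} = 1)
    (π' : Kernel Ω (X × Y)) [IsMarkovKernel π'] (hπ'fst : π'.fst = μ) (hπ'snd : π'.snd = ν)
    (hopt' : ∫⁻ ω, ∫⁻ q, ENNReal.ofReal (c ω q.1 q.2) ∂(π' ω) ∂P = stochCost P c μ ν) :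
    ∀ᵐ ω ∂P, π' ω {q : X × Y | φ ω q.2 - ψ ω q.1 = c ω q.1 q.2}ᶜ = 0 := by
  classical
  -- joint measurability of c
  have hcm : Measurable (fun p : Ω × (X × Y) => c p.1 p.2.1 p.2.2) := by
    have h := measurable_uncurry_of_continuous_of_measurable
      (u := fun (q : X × Y) (ω : Ω) => c ω q.1 q.2)
      (fun ω => hc_cont ω) (fun q => hc_meas q.1 q.2)
    exact h.comp measurable_swap
  set F : Ω × (X × Y) → ℝ := fun p => c p.1 p.2.1 p.2.2 with hF
  set G : Ω × (X × Y) → ℝ := fun p => φ p.1 p.2.2 - ψ p.1 p.2.1 with hG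
  have hφt : Measurable (fun p : Ω × (X × Y) => φ p.1 p.2.2) :=
    hφ.comp (measurable_fst.prodMk measurable_snd.snd)
  have hψt : Measurable (fun p : Ω × (X × Y) => ψ p.1 p.2.1) :=
    hψ.comp (measurable_fst.prodMk measurable_snd.fst)
  have hGm : Measurable G := hφt.sub hψt
  have hGF : ∀ p, G p ≤ F p := fun p => hineq _ _ _
  have hF0 : ∀ p, 0 ≤ F p := fun p => hc_nonneg _ _ _
  set θ : Measure (Ω × (X × Y)) := P ⊗ₘ π with hθdef
  set m : Measure (Ω × (X × Y)) := P ⊗ₘ π' with hmdef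
  have hKle : stochCost P c μ ν ≤
      ∫⁻ ω, ∫⁻ q, ENNReal.ofReal (c ω q.1 q.2) ∂((μ ω).prod (ν ω)) ∂P := by
    have hmem : (μ ×ₖ ν) ∈ {π : Kernel Ω (X × Y) |
        IsMarkovKernel π ∧ π.fst = μ ∧ π.snd = ν} :=
      ⟨inferInstance, Kernel.fst_prod μ ν, Kernel.snd_prod μ ν⟩
    refine le_trans (iInf₂_le (μ ×ₖ ν) hmem) (le_of_eq ?_)
    refine lintegral_congr fun ω => ?_
    rw [Kernel.prod_apply]
  have hKfin : stochCost P c μ ν ≠ ⊤ := (lt_of_le_of_lt hKle hint).ne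
  have hFmeas' : Measurable fun p => ENNReal.ofReal (F p) :=
    ENNReal.measurable_ofReal.comp hcm
  have hθc : ∫⁻ p, ENNReal.ofReal (F p) ∂θ = stochCost P c μ ν := by
    rw [hθdef, Measure.lintegral_compProd hFmeas']
    exact hopt
  have hmc : ∫⁻ p, ENNReal.ofReal (F p) ∂m = stochCost P c μ ν := by
    rw [hmdef, Measure.lintegral_compProd hFmeas']
    exact hopt'
  -- integrability of F
  have hnorm : ∀ (ρ : Measure (Ω × (X × Y))), ∫⁻ p, ENNReal.ofReal (F p) ∂ρ ≠ ⊤ →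
      Integrable F ρ := by
    intro ρ hρ
    refine ⟨hcm.aestronglyMeasurable, ?_⟩
    rw [hasFiniteIntegral_iff_norm]
    have : ∀ p, ENNReal.ofReal ‖F p‖ = ENNReal.ofReal (F p) := fun p => by
      rw [Real.norm_eq_abs, abs_of_nonneg (hF0 p)]
    simp_rw [this]
    exact lt_top_iff_ne_top.2 hρ
  have hFintθ : Integrable F θ := hnorm θ (by rw [hθc]; exact hKfin)
  have hFintm : Integrable F m := hnorm m (by rw [hmc]; exact hKfin)
  have hIθ : ∫ p, F p ∂θ = (stochCost P c μ ν).toReal := by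
    rw [integral_eq_lintegral_of_nonneg_ae (Eventually.of_forall hF0)
      hcm.aestronglyMeasurable, hθc]
  have hIm : ∫ p, F p ∂m = (stochCost P c μ ν).toReal := by
    rw [integral_eq_lintegral_of_nonneg_ae (Eventually.of_forall hF0)
      hcm.aestronglyMeasurable, hmc]
  -- truncated differences
  set D : ℕ → Ω × (X × Y) → ℝ :=
    fun n p => Tr n (φ p.1 p.2.2) - Tr n (ψ p.1 p.2.1) with hD
  have hDmeas : ∀ n, Measurable (D n) := fun n =>
    (((Tr_continuous n).measurable).comp hφt).sub
      (((Tr_continuous n).measurable).comp hψt)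
  have hDle : ∀ n p, D n p ≤ F p := fun n p =>
    Tr_sub_le_of_le (hF0 p) (hGF p)
  have hDbdd : ∀ n p, ‖D n p‖ ≤ (n:ℝ) + n := by
    intro n p
    rw [Real.norm_eq_abs]
    calc |D n p| ≤ |Tr n (φ p.1 p.2.2)| + |Tr n (ψ p.1 p.2.1)| := abs_sub _ _
      _ ≤ (n:ℝ) + n := add_le_add (Tr_abs_le _ _) (Tr_abs_le _ _)
  have hDtendsto : ∀ p, Tendsto (fun n => D n p) atTop (𝓝 (G p)) := fun p =>
    (Tr_tendsto _).sub (Tr_tendsto _)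
  have hDint : ∀ (ρ : Measure (Ω × (X × Y))) [IsProbabilityMeasure ρ],
      ∀ n, Integrable (D n) ρ := by
    intro ρ _ n
    refine ⟨(hDmeas n).aestronglyMeasurable, ?_⟩
    exact (hasFiniteIntegral_const ((n:ℝ) + n)).mono'
      (Eventually.of_forall fun p => hDbdd n p)
  -- splitting: the integral of D n only depends on the marginals
  have hsplit : ∀ n, ∫ p, D n p ∂m = ∫ p, D n p ∂θ := by
    intro n
    have hφn : Measurable (fun r : Ω × Y => Tr n (φ r.1 r.2)) :=
      (Tr_continuous n).measurable.comp hφ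
    have hψn : Measurable (fun r : Ω × X => Tr n (ψ r.1 r.2)) :=
      (Tr_continuous n).measurable.comp hψ
    have hint_of : ∀ (ρ : Measure (Ω × (X × Y))) [IsProbabilityMeasure ρ],
        Integrable (fun p : Ω × (X × Y) => Tr n (φ p.1 p.2.2)) ρ ∧
        Integrable (fun p : Ω × (X × Y) => Tr n (ψ p.1 p.2.1)) ρ := by
      intro ρ _
      constructor
      · exact ⟨(hφn.comp (measurable_fst.prodMk measurable_snd.snd)).aestronglyMeasurable,
          (hasFiniteIntegral_const (n:ℝ)).mono' (Eventually.of_forall fun p => by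
            simpa [Real.norm_eq_abs] using Tr_abs_le n (φ p.1 p.2.2))⟩
      · exact ⟨(hψn.comp (measurable_fst.prodMk measurable_snd.fst)).aestronglyMeasurable,
          (hasFiniteIntegral_const (n:ℝ)).mono' (Eventually.of_forall fun p => by
            simpa [Real.norm_eq_abs] using Tr_abs_le n (ψ p.1 p.2.1))⟩
    have hφpart : ∫ p, Tr n (φ p.1 p.2.2) ∂m = ∫ p, Tr n (φ p.1 p.2.2) ∂θ := by
      have h2 : ∀ (ρ : Measure (Ω × (X × Y))) (κ : Kernel Ω (X × Y)) [IsMarkovKernel κ],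
          ρ = P ⊗ₘ κ → κ.snd = ν →
          ∫ p, Tr n (φ p.1 p.2.2) ∂ρ = ∫ r, Tr n (φ r.1 r.2) ∂(P ⊗ₘ ν) := by
        intro ρ κ _ hρ hsnd
        rw [hρ, ← hsnd, ← map_snd_compProd_aux P κ,
          integral_map (measurable_fst.prodMk measurable_snd.snd).aemeasurable
            hφn.aestronglyMeasurable]
      rw [h2 m π' hmdef hπ'snd, h2 θ π hθdef hπsnd]
    have hψpart : ∫ p, Tr n (ψ p.1 p.2.1) ∂m = ∫ p, Tr n (ψ p.1 p.2.1) ∂θ := by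
      have h2 : ∀ (ρ : Measure (Ω × (X × Y))) (κ : Kernel Ω (X × Y)) [IsMarkovKernel κ],
          ρ = P ⊗ₘ κ → κ.fst = μ →
          ∫ p, Tr n (ψ p.1 p.2.1) ∂ρ = ∫ r, Tr n (ψ r.1 r.2) ∂(P ⊗ₘ μ) := by
        intro ρ κ _ hρ hfst
        rw [hρ, ← hfst, ← map_fst_compProd_aux P κ,
          integral_map (measurable_fst.prodMk measurable_snd.fst).aemeasurable
            hψn.aestronglyMeasurable]
      rw [h2 m π' hmdef hπ'fst, h2 θ π hθdef hπfst]
    have e1 := integral_sub (hint_of m).1 (hint_of m).2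
    have e2 := integral_sub (hint_of θ).1 (hint_of θ).2
    simp only [hD]
    rw [e1, e2, hφpart, hψpart]
  -- θ-a.e., G = F
  have haeθ : ∀ᵐ p ∂θ, G p = F p := by
    refine Measure.ae_compProd_of_ae_ae (measurableSet_eq_fun hGm hcm)
      (ae_of_all _ fun ω => ?_)
    have hsm : MeasurableSet {q : X × Y | φ ω q.2 - ψ ω q.1 = c ω q.1 q.2} :=
      measurableSet_eq_fun
        (((hφ.comp (measurable_const.prodMk measurable_id)).comp measurable_snd).sub
          ((hψ.comp (measurable_const.prodMk measurable_id)).comp measurable_fst))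
        (hc_cont ω).measurable
    have h0 : π ω {q : X × Y | φ ω q.2 - ψ ω q.1 = c ω q.1 q.2}ᶜ = 0 :=
      (prob_compl_eq_zero_iff hsm).2 (hfull ω)
    rw [ae_iff]
    exact h0
  -- dominated convergence under θ
  have hθten : Tendsto (fun n => ∫ p, D n p ∂θ) atTop (𝓝 ((stochCost P c μ ν).toReal)) := by
    rw [← hIθ]
    refine tendsto_integral_of_dominated_convergence F
      (fun n => (hDmeas n).aestronglyMeasurable) hFintθ ?_ ?_
    · intro n
      filter_upwards [haeθ] with p hp
      rw [Real.norm_eq_abs, abs_le]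
      refine ⟨?_, hDle n p⟩
      have h1 : ψ p.1 p.2.1 ≤ φ p.1 p.2.2 := by
        have h2 := hF0 p
        rw [← hp] at h2
        simp only [hG] at h2
        linarith
      have h3 := Tr_mono n h1
      have h4 := hF0 p
      simp only [hD]
      linarith
    · filter_upwards [haeθ] with p hp
      rw [← hp]
      exact hDtendsto p
  -- Fatou under m
  have hkey : ∫⁻ p, ENNReal.ofReal (F p - G p) ∂m = 0 := by
    refine le_antisymm ?_ (zero_le)
    have hlim : ∀ p, Tendsto (fun n => ENNReal.ofReal (F p - D n p)) atTop
        (𝓝 (ENNReal.ofReal (F p - G p))) := fun p =>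
      (ENNReal.continuous_ofReal.tendsto _).comp
        (tendsto_const_nhds.sub (hDtendsto p))
    have heq : ∀ n, ∫⁻ p, ENNReal.ofReal (F p - D n p) ∂m
        = ENNReal.ofReal ((stochCost P c μ ν).toReal - ∫ p, D n p ∂θ) := by
      intro n
      have h6 := ofReal_integral_eq_lintegral_ofReal (hFintm.sub (hDint m n))
        (Eventually.of_forall fun p => sub_nonneg.2 (hDle n p))
      simp only [Pi.sub_apply] at h6
      rw [← h6, integral_sub hFintm (hDint m n), hIm, hsplit n]
    have hten0 : Tendsto (fun n => ENNReal.ofReal ((stochCost P c μ ν).toReal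
        - ∫ p, D n p ∂θ)) atTop (𝓝 0) := by
      have h5 : Tendsto (fun n => (stochCost P c μ ν).toReal - ∫ p, D n p ∂θ)
          atTop (𝓝 0) := by
        have := tendsto_const_nhds (x := (stochCost P c μ ν).toReal)
          (f := atTop (α := ℕ)) |>.sub hθten
        simpa using this
      have := (ENNReal.continuous_ofReal.tendsto 0).comp h5
      rw [ENNReal.ofReal_zero] at this; exact this
    calc ∫⁻ p, ENNReal.ofReal (F p - G p) ∂m
        = ∫⁻ p, liminf (fun n => ENNReal.ofReal (F p - D n p)) atTop ∂m :=
          lintegral_congr fun p => ((hlim p).liminf_eq).symm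
      _ ≤ liminf (fun n => ∫⁻ p, ENNReal.ofReal (F p - D n p) ∂m) atTop :=
          lintegral_liminf_le fun n =>
            ENNReal.measurable_ofReal.comp (hcm.sub (hDmeas n))
      _ = 0 := by
          rw [liminf_congr (Eventually.of_forall heq)]
          exact hten0.liminf_eq
  have haem : ∀ᵐ p ∂m, G p = F p := by
    have h0 := (lintegral_eq_zero_iff
      (ENNReal.measurable_ofReal.comp (hcm.sub hGm))).1 hkey
    filter_upwards [h0] with p hp
    have h1 : F p - G p ≤ 0 := by
      simpa [ENNReal.ofReal_eq_zero] using hp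
    have := hGF p
    linarith
  have hfin := Measure.ae_ae_of_ae_compProd haem
  filter_upwards [hfin] with ω hω
  rw [ae_iff] at hω
  exact hω
end

section
/- Let X and Y be Polish spaces with fixed base points x_0 ∈ X, y_0 ∈ Y, and let C be the space of nonnegative continuous functions c : X×Y → [0,∞) equipped with the metric of uniform convergence on the products of closed balls B^m_X(x_0) × B^m_Y(y_0). Let (c_n, μ_n, ν_n) be a sequence with c_n ∈ C, μ_n ∈ P(X), ν_n ∈ P(Y) such that sup_n ∫_{X×Y} c_n(x,y) μ_n(dx) ν_n(dy) ≤ M for a constant M, and suppose c_n → c uniformly on each B^m_X(x_0) × B^m_Y(y_0), μ_n → μ weakly and ν_n → ν weakly. Then ∫_{X×Y} c(x,y) μ(dx) ν(dy) ≤ M. -/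
open MeasureTheory ProbabilityTheory Filter Topology ENNReal Metric Set

/-- One-sided Lipschitz bound gives Lipschitz. -/
lemma lipschitzWith_of_le {α : Type*} [PseudoMetricSpace α] {f : α → ℝ} {L : ℝ} (hL : 0 ≤ L)
    (h : ∀ z w, f z ≤ f w + L * dist z w) : LipschitzWith L.toNNReal f := by
  apply LipschitzWith.of_dist_le_mul
  intro z w
  rw [Real.dist_eq, abs_sub_le_iff, Real.coe_toNNReal _ hL]
  constructor
  · have := h z w; linarith
  · have := h w z; rw [dist_comm] at this; linarith

/-- Quantitative Lévy–Prokhorov bound for bounded Lipschitz-type nonnegative functions. -/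
lemma lintegral_le_of_levyProkhorovEDist_lt {Z : Type*} [MeasurableSpace Z] [PseudoMetricSpace Z]
    [OpensMeasurableSpace Z]
    (ρ σ : Measure Z) [IsProbabilityMeasure ρ] [IsProbabilityMeasure σ]
    {ε L B : ℝ} (hε : 0 < ε) (hL : 0 ≤ L) (hB : 0 ≤ B)
    (hρσ : levyProkhorovEDist ρ σ < ENNReal.ofReal ε)
    {f : Z → ℝ} (hf : ∀ z w, f z ≤ f w + L * dist z w)
    (hf0 : ∀ z, 0 ≤ f z) (hfB : ∀ z, f z ≤ B) :
    ∫⁻ z, ENNReal.ofReal (f z) ∂ρ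
      ≤ (∫⁻ z, ENNReal.ofReal (f z) ∂σ) + ENNReal.ofReal ((L + B) * ε) := by
  have hfc : Continuous f := (lipschitzWith_of_le hL hf).continuous
  have hfm : Measurable f := hfc.measurable
  rw [lintegral_eq_lintegral_meas_le ρ (ae_of_all _ hf0) hfm.aemeasurable]
  -- restrict to Ioc 0 B
  have hsplit : ∫⁻ t in Ioi (0:ℝ), ρ {z | t ≤ f z} = ∫⁻ t in Ioc 0 B, ρ {z | t ≤ f z} := by
    rw [← Ioc_union_Ioi_eq_Ioi hB, lintegral_union measurableSet_Ioi (Set.Ioc_disjoint_Ioi le_rfl)]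
    have : ∫⁻ t in Ioi B, ρ {z | t ≤ f z} = 0 := by
      rw [setLIntegral_congr_fun measurableSet_Ioi
        ((fun t (ht : B < t) => show ρ {z | t ≤ f z} = (fun _ => (0:ℝ≥0∞)) t by
          have : {z | t ≤ f z} = ∅ := by
            ext z; simp only [mem_setOf_eq, mem_empty_iff_false, iff_false, not_le]
            exact lt_of_le_of_lt (hfB z) ht
          simp [this]))]
      simp
    rw [this, add_zero]
  rw [hsplit]
  have key : ∀ t ∈ Ioc (0:ℝ) B, ρ {z | t ≤ f z}
      ≤ σ {z | t ≤ f z + L * ε} + ENNReal.ofReal ε := by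
    intro t _
    have h1 := left_measure_le_of_levyProkhorovEDist_lt hρσ
      (B := {z | t ≤ f z}) (hfm measurableSet_Ici)
    rw [ENNReal.toReal_ofReal hε.le] at h1
    refine h1.trans (add_le_add (measure_mono ?_) le_rfl)
    intro z hz
    rw [mem_thickening_iff] at hz
    obtain ⟨w, hw, hdw⟩ := hz
    have := hf w z
    rw [dist_comm] at hdw
    have : f w ≤ f z + L * ε := by
      calc f w ≤ f z + L * dist w z := hf w z
        _ ≤ f z + L * ε := by
            have : dist w z ≤ ε := hdw.le
            nlinarith
    exact le_trans hw this
  calc ∫⁻ t in Ioc (0:ℝ) B, ρ {z | t ≤ f z}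
      ≤ ∫⁻ t in Ioc (0:ℝ) B, (σ {z | t ≤ f z + L * ε} + ENNReal.ofReal ε) := by
        apply setLIntegral_mono_ae ?_ (ae_of_all _ key)
        apply AEMeasurable.add ?_ aemeasurable_const
        apply Measurable.aemeasurable
        apply Antitone.measurable
        intro s t hst
        exact measure_mono (fun z hz => le_trans hst hz)
    _ = (∫⁻ t in Ioc (0:ℝ) B, σ {z | t ≤ f z + L * ε}) + ENNReal.ofReal ε * volume (Ioc (0:ℝ) B) := by
        rw [lintegral_add_right _ measurable_const, lintegral_const,
          Measure.restrict_apply_univ]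
    _ ≤ (∫⁻ t in Ioi (0:ℝ), σ {z | t ≤ f z + L * ε}) + ENNReal.ofReal ε * ENNReal.ofReal B := by
        gcongr
        · exact Ioc_subset_Ioi_self
        · rw [Real.volume_Ioc, sub_zero]
    _ = (∫⁻ z, ENNReal.ofReal (f z + L * ε) ∂σ) + ENNReal.ofReal ε * ENNReal.ofReal B := by
        rw [lintegral_eq_lintegral_meas_le σ
          (ae_of_all _ (fun z => add_nonneg (hf0 z) (mul_nonneg hL hε.le))) ((hfm.add_const _).aemeasurable)]
    _ ≤ ((∫⁻ z, ENNReal.ofReal (f z) ∂σ) + ENNReal.ofReal (L * ε)) + ENNReal.ofReal ε * ENNReal.ofReal B := by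
        gcongr
        calc ∫⁻ z, ENNReal.ofReal (f z + L * ε) ∂σ
            ≤ ∫⁻ z, (ENNReal.ofReal (f z) + ENNReal.ofReal (L * ε)) ∂σ :=
              lintegral_mono (fun z => ENNReal.ofReal_add_le)
          _ = (∫⁻ z, ENNReal.ofReal (f z) ∂σ) + ENNReal.ofReal (L * ε) := by
              rw [lintegral_add_right _ measurable_const, lintegral_const, measure_univ, mul_one]
    _ ≤ (∫⁻ z, ENNReal.ofReal (f z) ∂σ) + ENNReal.ofReal ((L + B) * ε) := by
        rw [add_assoc]
        gcongr
        rw [← ENNReal.ofReal_mul hε.le, ← ENNReal.ofReal_add (by positivity) (by positivity)]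
        apply ENNReal.ofReal_le_ofReal
        ring_nf
        nlinarith [hε.le]
open MeasureTheory ProbabilityTheory Filter Topology ENNReal Metric Set TopologicalSpace

lemma eventually_levyProkhorovEDist_lt {Z : Type*} [MeasurableSpace Z] [PseudoMetricSpace Z]
    [OpensMeasurableSpace Z] [SeparableSpace Z]
    (Pn : ℕ → ProbabilityMeasure Z) (P : ProbabilityMeasure Z)
    (h : Tendsto Pn atTop (𝓝 P)) {ε : ℝ} (hε : 0 < ε) :
    ∀ᶠ n in atTop, levyProkhorovEDist (P : Measure Z) (Pn n : Measure Z) < ENNReal.ofReal ε := by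
  have cont := LevyProkhorov.continuous_ofMeasure_probabilityMeasure (Ω := Z)
  have h2 : Tendsto (fun n => LevyProkhorov.ofMeasure (Pn n)) atTop
      (𝓝 (LevyProkhorov.ofMeasure P)) := (cont.tendsto _).comp h
  have h3 := (Metric.tendsto_atTop.mp h2) ε hε
  obtain ⟨N, hN⟩ := h3
  filter_upwards [eventually_ge_atTop N] with n hn
  have hd := hN n hn
  rw [LevyProkhorov.dist_probabilityMeasure_def] at hd
  have hne := levyProkhorovEDist_ne_top (P : Measure Z) (Pn n : Measure Z)
  rw [← ENNReal.ofReal_toReal hne]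
  rw [levyProkhorovDist_comm] at hd
  exact (ENNReal.ofReal_lt_ofReal_iff hε).mpr hd
open MeasureTheory ProbabilityTheory Filter Topology ENNReal Metric Set TopologicalSpace

section Approx
variable {X Y : Type*} [MetricSpace X] [MetricSpace Y] [Nonempty X] [Nonempty Y]

/-- Truncated and cut-off version of `c`. -/
noncomputable def gApp (c : X → Y → ℝ) (x₀ : X) (y₀ : Y) (j : ℕ) (q : X × Y) : ℝ :=
  min (c q.1 q.2) j * min 1 (max 0 ((j : ℝ) + 1 - max (dist q.1 x₀) (dist q.2 y₀)))

/-- Moreau–Yosida regularization of `gApp`. -/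
noncomputable def FApp (c : X → Y → ℝ) (x₀ : X) (y₀ : Y) (j : ℕ) (q : X × Y) : ℝ :=
  ⨅ q' : X × Y, gApp c x₀ y₀ j q' + j * dist q q'

variable {c : X → Y → ℝ} {x₀ : X} {y₀ : Y} {j k : ℕ} {q w : X × Y}

lemma gApp_nonneg (hc : ∀ x y, 0 ≤ c x y) : 0 ≤ gApp c x₀ y₀ j q :=
  mul_nonneg (le_min (hc _ _) (Nat.cast_nonneg j)) (le_min zero_le_one (le_max_left _ _))

lemma gApp_le_j (hc : ∀ x y, 0 ≤ c x y) : gApp c x₀ y₀ j q ≤ j := by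
  refine le_trans (mul_le_of_le_one_right (le_min (hc _ _) (Nat.cast_nonneg j)) (min_le_left _ _))
    (min_le_right _ _)

lemma gApp_le_c (hc : ∀ x y, 0 ≤ c x y) : gApp c x₀ y₀ j q ≤ c q.1 q.2 := by
  refine le_trans (mul_le_of_le_one_right (le_min (hc _ _) (Nat.cast_nonneg j)) (min_le_left _ _))
    (min_le_left _ _)

lemma gApp_mono (hc : ∀ x y, 0 ≤ c x y) (hjk : j ≤ k) : gApp c x₀ y₀ j q ≤ gApp c x₀ y₀ k q := by
  apply mul_le_mul
  · exact min_le_min le_rfl (Nat.cast_le.mpr hjk)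
  · apply min_le_min le_rfl
    apply max_le_max le_rfl
    have : (j:ℝ) ≤ k := Nat.cast_le.mpr hjk
    linarith
  · exact le_min zero_le_one (le_max_left _ _)
  · exact le_min (hc _ _) (Nat.cast_nonneg k)

lemma gApp_zero_of (hq : q ∉ closedBall x₀ ((j:ℝ) + 1) ×ˢ closedBall y₀ ((j:ℝ) + 1)) :
    gApp c x₀ y₀ j q = 0 := by
  have : (j : ℝ) + 1 ≤ max (dist q.1 x₀) (dist q.2 y₀) := by
    rw [Set.mem_prod, not_and_or] at hq
    rcases hq with h | h
    · exact le_max_of_le_left (le_of_not_ge (fun hh => h (mem_closedBall.mpr hh)))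
    · exact le_max_of_le_right (le_of_not_ge (fun hh => h (mem_closedBall.mpr hh)))
  have h1 : max 0 ((j : ℝ) + 1 - max (dist q.1 x₀) (dist q.2 y₀)) = 0 :=
    max_eq_left (by linarith)
  simp [gApp, h1]

lemma gApp_eq_c (h1 : dist q.1 x₀ ≤ j) (h2 : dist q.2 y₀ ≤ j) (h3 : c q.1 q.2 ≤ j) :
    gApp c x₀ y₀ j q = c q.1 q.2 := by
  have hcut : min 1 (max 0 ((j : ℝ) + 1 - max (dist q.1 x₀) (dist q.2 y₀))) = 1 := by
    have hmax : max (dist q.1 x₀) (dist q.2 y₀) ≤ j := max_le h1 h2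
    rw [min_eq_left]
    rw [le_max_iff]; right; linarith
  rw [gApp, hcut, mul_one, min_eq_left h3]

lemma gApp_cont (hc : Continuous (fun q : X × Y => c q.1 q.2)) :
    Continuous (gApp c x₀ y₀ j) := by
  unfold gApp
  fun_prop

lemma FApp_bdd (hc : ∀ x y, 0 ≤ c x y) :
    BddBelow (Set.range fun q' : X × Y => gApp c x₀ y₀ j q' + j * dist q q') := by
  refine ⟨0, fun r ⟨q', hq'⟩ => ?_⟩
  rw [← hq']
  exact add_nonneg (gApp_nonneg hc) (mul_nonneg (Nat.cast_nonneg j) dist_nonneg)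

lemma FApp_nonneg (hc : ∀ x y, 0 ≤ c x y) : 0 ≤ FApp c x₀ y₀ j q :=
  Real.iInf_nonneg fun q' =>
    add_nonneg (gApp_nonneg hc) (mul_nonneg (Nat.cast_nonneg j) dist_nonneg)

lemma FApp_le (hc : ∀ x y, 0 ≤ c x y) (q' : X × Y) :
    FApp c x₀ y₀ j q ≤ gApp c x₀ y₀ j q' + j * dist q q' :=
  ciInf_le (FApp_bdd hc) q'

lemma FApp_le_gApp (hc : ∀ x y, 0 ≤ c x y) : FApp c x₀ y₀ j q ≤ gApp c x₀ y₀ j q := by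
  have := FApp_le (q := q) (x₀ := x₀) (y₀ := y₀) (j := j) hc q
  simpa using this

lemma le_FApp {a : ℝ} (h : ∀ q' : X × Y, a ≤ gApp c x₀ y₀ j q' + j * dist q q') :
    a ≤ FApp c x₀ y₀ j q := le_ciInf h

lemma FApp_lip (hc : ∀ x y, 0 ≤ c x y) :
    FApp c x₀ y₀ j q ≤ FApp c x₀ y₀ j w + j * dist q w := by
  rw [← sub_le_iff_le_add]
  apply le_FApp
  intro q'
  have h1 := FApp_le (q := q) (x₀ := x₀) (y₀ := y₀) (j := j) hc q'
  have h2 := dist_triangle q w q'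
  have h3 : (j:ℝ) * dist q q' ≤ j * (dist q w + dist w q') :=
    mul_le_mul_of_nonneg_left h2 (Nat.cast_nonneg j)
  linarith

lemma FApp_mono (hc : ∀ x y, 0 ≤ c x y) (hjk : j ≤ k) :
    FApp c x₀ y₀ j q ≤ FApp c x₀ y₀ k q := by
  apply le_FApp
  intro q'
  refine (FApp_le hc q').trans (add_le_add (gApp_mono hc hjk) ?_)
  exact mul_le_mul_of_nonneg_right (Nat.cast_le.mpr hjk) dist_nonneg

lemma FApp_le_c (hc : ∀ x y, 0 ≤ c x y) : FApp c x₀ y₀ j q ≤ c q.1 q.2 :=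
  (FApp_le_gApp hc).trans (gApp_le_c hc)

lemma FApp_le_j (hc : ∀ x y, 0 ≤ c x y) : FApp c x₀ y₀ j q ≤ j :=
  (FApp_le_gApp hc).trans (gApp_le_j hc)

lemma FApp_zero_of (hc : ∀ x y, 0 ≤ c x y)
    (hq : q ∉ closedBall x₀ ((j:ℝ) + 1) ×ˢ closedBall y₀ ((j:ℝ) + 1)) :
    FApp c x₀ y₀ j q = 0 :=
  le_antisymm (by rw [← gApp_zero_of (c := c) hq]; exact FApp_le_gApp hc) (FApp_nonneg hc)

lemma FApp_tendsto (hcc : Continuous (fun q : X × Y => c q.1 q.2)) (hc : ∀ x y, 0 ≤ c x y) :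
    Tendsto (fun j => FApp c x₀ y₀ j q) atTop (𝓝 (c q.1 q.2)) := by
  rw [Metric.tendsto_atTop]
  intro ε hε
  -- find j₀ such that gApp j q = c q for j ≥ j₀, then a radius r, then large j
  set j₁ : ℕ := ⌈max (max (dist q.1 x₀) (dist q.2 y₀)) (c q.1 q.2)⌉₊ with hj₁
  have hj₁₁ : dist q.1 x₀ ≤ j₁ := le_trans (le_max_of_le_left (le_max_left _ _)) (Nat.le_ceil _)
  have hj₁₂ : dist q.2 y₀ ≤ j₁ := le_trans (le_max_of_le_left (le_max_right _ _)) (Nat.le_ceil _)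
  have hj₁₃ : c q.1 q.2 ≤ j₁ := le_trans (le_max_right _ _) (Nat.le_ceil _)
  have hgq : gApp c x₀ y₀ j₁ q = c q.1 q.2 := gApp_eq_c hj₁₁ hj₁₂ hj₁₃
  -- continuity of gApp j₁ at q gives a ball where gApp j₁ > c q - ε/2
  have hopen : IsOpen {w : X × Y | c q.1 q.2 - ε / 2 < gApp c x₀ y₀ j₁ w} :=
    isOpen_lt continuous_const (gApp_cont hcc)
  have hqmem : q ∈ {w : X × Y | c q.1 q.2 - ε / 2 < gApp c x₀ y₀ j₁ w} := by
    simp only [mem_setOf_eq, hgq]; linarith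
  obtain ⟨r, hr, hball⟩ := Metric.mem_nhds_iff.mp (hopen.mem_nhds hqmem)
  set j₂ : ℕ := max j₁ ⌈(c q.1 q.2) / r⌉₊ with hj₂
  refine ⟨j₂, fun n hn => ?_⟩
  have hn₁ : j₁ ≤ n := le_trans (le_max_left _ _) hn
  have hn₂ : (c q.1 q.2) / r ≤ (n : ℝ) := by
    refine le_trans (Nat.le_ceil _) ?_
    exact_mod_cast le_trans (le_max_right j₁ _) hn
  have hlow : c q.1 q.2 - ε / 2 ≤ FApp c x₀ y₀ n q := by
    apply le_FApp
    intro q'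
    by_cases hd : dist q q' < r
    · have : q' ∈ Metric.ball q r := by rwa [Metric.mem_ball, dist_comm]
      have h1 := hball this
      simp only [mem_setOf_eq] at h1
      have h2 : gApp c x₀ y₀ j₁ q' ≤ gApp c x₀ y₀ n q' := gApp_mono hc hn₁
      have h3 : 0 ≤ (n:ℝ) * dist q q' := mul_nonneg (Nat.cast_nonneg n) dist_nonneg
      linarith
    · push_neg at hd
      have h2 : c q.1 q.2 ≤ (n:ℝ) * dist q q' := by
        calc c q.1 q.2 = (c q.1 q.2 / r) * r := by field_simp
          _ ≤ (n:ℝ) * r := mul_le_mul_of_nonneg_right hn₂ hr.le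
          _ ≤ (n:ℝ) * dist q q' := mul_le_mul_of_nonneg_left hd (Nat.cast_nonneg n)
      have h3 := gApp_nonneg (x₀ := x₀) (y₀ := y₀) (j := n) (q := q') hc
      linarith
  have hup : FApp c x₀ y₀ n q ≤ c q.1 q.2 := FApp_le_c hc
  rw [Real.dist_eq, abs_lt]
  constructor <;> linarith

end Approx

open MeasureTheory ProbabilityTheory Filter Topology ENNReal

/-- **Stability of the integral bound under convergence in `𝕄`.**
If `∫ c_n d(μ_n ⊗ ν_n) ≤ M` for all `n`, `c_n → c` uniformly on products of closed balls,
`μ_n → μ` weakly and `ν_n → ν` weakly, then `∫ c d(μ ⊗ ν) ≤ M`. -/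
theorem lintegral_prod_le_of_tendsto
    {X Y : Type*}
    [MetricSpace X] [CompleteSpace X] [SecondCountableTopology X]
    [MeasurableSpace X] [BorelSpace X]
    [MetricSpace Y] [CompleteSpace Y] [SecondCountableTopology Y]
    [MeasurableSpace Y] [BorelSpace Y]
    (x₀ : X) (y₀ : Y)
    (cn : ℕ → X → Y → ℝ) (c : X → Y → ℝ)
    (hcn_cont : ∀ n, Continuous (fun q : X × Y => cn n q.1 q.2))
    (hcn_nonneg : ∀ n x y, 0 ≤ cn n x y)
    (hc_cont : Continuous (fun q : X × Y => c q.1 q.2))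
    (hc_nonneg : ∀ x y, 0 ≤ c x y)
    (μn : ℕ → ProbabilityMeasure X) (μ : ProbabilityMeasure X)
    (νn : ℕ → ProbabilityMeasure Y) (ν : ProbabilityMeasure Y)
    (M : ℝ≥0∞)
    (hM : ∀ n, ∫⁻ q, ENNReal.ofReal (cn n q.1 q.2)
        ∂((μn n : Measure X).prod (νn n : Measure Y)) ≤ M)
    (hcconv : ∀ m : ℕ, TendstoUniformlyOn (fun (n : ℕ) (q : X × Y) => cn n q.1 q.2)
        (fun q : X × Y => c q.1 q.2) atTop
        ((Metric.closedBall x₀ (m : ℝ)) ×ˢ (Metric.closedBall y₀ (m : ℝ))))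
    (hμ : Tendsto μn atTop (𝓝 μ)) (hν : Tendsto νn atTop (𝓝 ν)) :
    ∫⁻ q, ENNReal.ofReal (c q.1 q.2) ∂((μ : Measure X).prod (ν : Measure Y)) ≤ M := by
  haveI : Nonempty X := μ.nonempty
  haveI : Nonempty Y := ν.nonempty
  rcases eq_top_or_lt_top M with hMtop | _
  · simp [hMtop]
  -- Lipschitz-type estimate and continuity for the approximations
  have hFlip : ∀ (j : ℕ) (z w : X × Y),
      FApp c x₀ y₀ j z ≤ FApp c x₀ y₀ j w + (j : ℝ) * dist z w :=
    fun j z w => FApp_lip hc_nonneg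
  have hFcont : ∀ j : ℕ, Continuous (FApp c x₀ y₀ j) :=
    fun j => (lipschitzWith_of_le (Nat.cast_nonneg j) (hFlip j)).continuous
  -- Step 1: the bound for each approximation
  have key : ∀ j : ℕ,
      ∫⁻ q, ENNReal.ofReal (FApp c x₀ y₀ j q) ∂((μ : Measure X).prod ν) ≤ M := by
    intro j
    apply ENNReal.le_of_forall_pos_le_add
    intro ε hε _
    set δ : ℝ := (ε : ℝ) / (4 * j + 1) with hδdef
    have hδpos : 0 < δ := by positivity
    have h1 := eventually_levyProkhorovEDist_lt μn μ hμ hδpos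
    have h2 := eventually_levyProkhorovEDist_lt νn ν hν hδpos
    have h3 := (Metric.tendstoUniformlyOn_iff.mp (hcconv (j + 1))) δ hδpos
    obtain ⟨n, hn1, hn2, hn3⟩ := (h1.and (h2.and h3)).exists
    push_cast at hn3
    set F : X × Y → ℝ := FApp c x₀ y₀ j with hFdef
    have hF0 : ∀ q, 0 ≤ F q := fun q => FApp_nonneg hc_nonneg
    have hFj : ∀ q, F q ≤ j := fun q => FApp_le_j hc_nonneg
    have hFmeas : Measurable fun q : X × Y => ENNReal.ofReal (F q) :=
      (hFcont j).measurable.ennreal_ofReal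
    -- integrability of slices
    have hFint : ∀ (ρ : Measure Y) [IsProbabilityMeasure ρ] (x : X),
        Integrable (fun y => F (x, y)) ρ := by
      intro ρ _ x
      refine Integrable.mono' (integrable_const (j : ℝ))
        ((hFcont j).comp (Continuous.prodMk_right x)).aestronglyMeasurable
        (ae_of_all _ fun y => ?_)
      rw [Real.norm_eq_abs, abs_le]
      exact ⟨by linarith [hF0 (x, y)], hFj (x, y)⟩
    have hFint' : ∀ (ρ : Measure X) [IsProbabilityMeasure ρ] (y : Y),
        Integrable (fun x => F (x, y)) ρ := by
      intro ρ _ y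
      refine Integrable.mono' (integrable_const (j : ℝ))
        ((hFcont j).comp (continuous_id.prodMk continuous_const)).aestronglyMeasurable
        (ae_of_all _ fun x => ?_)
      rw [Real.norm_eq_abs, abs_le]
      exact ⟨by linarith [hF0 (x, y)], hFj (x, y)⟩
    -- the x-marginal auxiliary function
    set G : X → ℝ := fun x => ∫ y, F (x, y) ∂(ν : Measure Y) with hGdef
    have hG0 : ∀ x, 0 ≤ G x := fun x => integral_nonneg fun y => hF0 (x, y)
    have hGj : ∀ x, G x ≤ j := by
      intro x
      calc G x ≤ ∫ _, (j : ℝ) ∂(ν : Measure Y) :=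
            integral_mono (hFint _ x) (integrable_const _) fun y => hFj (x, y)
        _ = j := by simp
    have hGlip : ∀ z w : X, G z ≤ G w + (j : ℝ) * dist z w := by
      intro z w
      have : ∀ y : Y, F (z, y) ≤ F (w, y) + (j : ℝ) * dist z w := by
        intro y
        have := hFlip j (z, y) (w, y)
        rwa [Prod.dist_eq, dist_self, max_eq_left dist_nonneg] at this
      calc G z ≤ ∫ y, (F (w, y) + (j : ℝ) * dist z w) ∂(ν : Measure Y) :=
            integral_mono (hFint _ z) ((hFint _ w).add (integrable_const _)) this
        _ = G w + (j : ℝ) * dist z w := by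
            rw [integral_add (hFint _ w) (integrable_const _)]
            simp
            rfl
    have hGof : ∀ x, ENNReal.ofReal (G x) = ∫⁻ y, ENNReal.ofReal (F (x, y)) ∂(ν : Measure Y) :=
      fun x => ofReal_integral_eq_lintegral_ofReal (hFint _ x) (ae_of_all _ fun y => hF0 (x, y))
    -- the y-marginal auxiliary function (with μn n)
    set H : Y → ℝ := fun y => ∫ x, F (x, y) ∂(μn n : Measure X) with hHdef
    have hH0 : ∀ y, 0 ≤ H y := fun y => integral_nonneg fun x => hF0 (x, y)
    have hHj : ∀ y, H y ≤ j := by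
      intro y
      calc H y ≤ ∫ _, (j : ℝ) ∂(μn n : Measure X) :=
            integral_mono (hFint' _ y) (integrable_const _) fun x => hFj (x, y)
        _ = j := by simp
    have hHlip : ∀ z w : Y, H z ≤ H w + (j : ℝ) * dist z w := by
      intro z w
      have : ∀ x : X, F (x, z) ≤ F (x, w) + (j : ℝ) * dist z w := by
        intro x
        have := hFlip j (x, z) (x, w)
        rwa [Prod.dist_eq, dist_self, max_eq_right dist_nonneg] at this
      calc H z ≤ ∫ x, (F (x, w) + (j : ℝ) * dist z w) ∂(μn n : Measure X) :=
            integral_mono (hFint' _ z) ((hFint' _ w).add (integrable_const _)) this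
        _ = H w + (j : ℝ) * dist z w := by
            rw [integral_add (hFint' _ w) (integrable_const _)]
            simp
            rfl
    have hHof : ∀ y, ENNReal.ofReal (H y) = ∫⁻ x, ENNReal.ofReal (F (x, y)) ∂(μn n : Measure X) :=
      fun y => ofReal_integral_eq_lintegral_ofReal (hFint' _ y) (ae_of_all _ fun x => hF0 (x, y))
    -- the chain of estimates
    have A1 : ∫⁻ q, ENNReal.ofReal (F q) ∂((μ : Measure X).prod ν)
        = ∫⁻ x, ENNReal.ofReal (G x) ∂(μ : Measure X) := by
      rw [lintegral_prod _ hFmeas.aemeasurable]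
      exact lintegral_congr fun x => (hGof x).symm
    have A2 : ∫⁻ x, ENNReal.ofReal (G x) ∂(μ : Measure X)
        ≤ (∫⁻ x, ENNReal.ofReal (G x) ∂(μn n : Measure X))
          + ENNReal.ofReal (((j : ℝ) + j) * δ) :=
      lintegral_le_of_levyProkhorovEDist_lt _ _ hδpos (Nat.cast_nonneg j) (Nat.cast_nonneg j)
        hn1 hGlip hG0 hGj
    have A3 : ∫⁻ x, ENNReal.ofReal (G x) ∂(μn n : Measure X)
        = ∫⁻ q, ENNReal.ofReal (F q) ∂((μn n : Measure X).prod ν) := by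
      rw [lintegral_prod _ hFmeas.aemeasurable]
      exact (lintegral_congr fun x => (hGof x).symm).symm
    have A4 : ∫⁻ q, ENNReal.ofReal (F q) ∂((μn n : Measure X).prod ν)
        = ∫⁻ y, ENNReal.ofReal (H y) ∂(ν : Measure Y) := by
      rw [lintegral_prod_symm _ hFmeas.aemeasurable]
      exact lintegral_congr fun y => (hHof y).symm
    have A5 : ∫⁻ y, ENNReal.ofReal (H y) ∂(ν : Measure Y)
        ≤ (∫⁻ y, ENNReal.ofReal (H y) ∂(νn n : Measure Y))
          + ENNReal.ofReal (((j : ℝ) + j) * δ) :=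
      lintegral_le_of_levyProkhorovEDist_lt _ _ hδpos (Nat.cast_nonneg j) (Nat.cast_nonneg j)
        hn2 hHlip hH0 hHj
    have A6 : ∫⁻ y, ENNReal.ofReal (H y) ∂(νn n : Measure Y)
        = ∫⁻ q, ENNReal.ofReal (F q) ∂((μn n : Measure X).prod (νn n : Measure Y)) := by
      rw [lintegral_prod_symm _ hFmeas.aemeasurable]
      exact (lintegral_congr fun y => (hHof y).symm).symm
    have A7 : ∫⁻ q, ENNReal.ofReal (F q) ∂((μn n : Measure X).prod (νn n : Measure Y))
        ≤ M + ENNReal.ofReal δ := by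
      have hpt : ∀ q : X × Y, ENNReal.ofReal (F q)
          ≤ ENNReal.ofReal (cn n q.1 q.2) + ENNReal.ofReal δ := by
        intro q
        by_cases hq : q ∈ Metric.closedBall x₀ ((j : ℝ) + 1) ×ˢ Metric.closedBall y₀ ((j : ℝ) + 1)
        · have hd := hn3 q hq
          rw [Real.dist_eq, abs_lt] at hd
          have h1 : F q ≤ c q.1 q.2 := FApp_le_c hc_nonneg
          calc ENNReal.ofReal (F q) ≤ ENNReal.ofReal (cn n q.1 q.2 + δ) :=
                ENNReal.ofReal_le_ofReal (by linarith [hd.1])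
            _ ≤ ENNReal.ofReal (cn n q.1 q.2) + ENNReal.ofReal δ := ENNReal.ofReal_add_le
        · rw [show F q = 0 from FApp_zero_of hc_nonneg hq]
          simp
      calc ∫⁻ q, ENNReal.ofReal (F q) ∂((μn n : Measure X).prod (νn n : Measure Y))
          ≤ ∫⁻ q, (ENNReal.ofReal (cn n q.1 q.2) + ENNReal.ofReal δ)
              ∂((μn n : Measure X).prod (νn n : Measure Y)) := lintegral_mono hpt
        _ = (∫⁻ q, ENNReal.ofReal (cn n q.1 q.2)
              ∂((μn n : Measure X).prod (νn n : Measure Y))) + ENNReal.ofReal δ := by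
            rw [lintegral_add_right _ measurable_const, lintegral_const, measure_univ, mul_one]
        _ ≤ M + ENNReal.ofReal δ := by gcongr; exact hM n
    -- combine
    have total : ∫⁻ q, ENNReal.ofReal (F q) ∂((μ : Measure X).prod ν)
        ≤ M + (ENNReal.ofReal δ + ENNReal.ofReal (((j : ℝ) + j) * δ)
            + ENNReal.ofReal (((j : ℝ) + j) * δ)) := by
      calc ∫⁻ q, ENNReal.ofReal (F q) ∂((μ : Measure X).prod ν)
          ≤ (∫⁻ q, ENNReal.ofReal (F q) ∂((μn n : Measure X).prod ν))
            + ENNReal.ofReal (((j : ℝ) + j) * δ) := by rw [A1, ← A3]; exact A2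
        _ ≤ ((∫⁻ q, ENNReal.ofReal (F q) ∂((μn n : Measure X).prod (νn n : Measure Y)))
            + ENNReal.ofReal (((j : ℝ) + j) * δ)) + ENNReal.ofReal (((j : ℝ) + j) * δ) := by
            gcongr
            rw [A4, ← A6]; exact A5
        _ ≤ ((M + ENNReal.ofReal δ) + ENNReal.ofReal (((j : ℝ) + j) * δ))
            + ENNReal.ofReal (((j : ℝ) + j) * δ) := by gcongr
        _ = M + (ENNReal.ofReal δ + ENNReal.ofReal (((j : ℝ) + j) * δ)
            + ENNReal.ofReal (((j : ℝ) + j) * δ)) := by ring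
    refine total.trans ?_
    gcongr
    have hjδ : 0 ≤ ((j : ℝ) + j) * δ := by positivity
    rw [← ENNReal.ofReal_add (by positivity) hjδ, ← ENNReal.ofReal_add (by positivity) hjδ]
    rw [← ENNReal.ofReal_coe_nnreal]
    apply ENNReal.ofReal_le_ofReal
    have h41 : (0:ℝ) < 4 * j + 1 := by positivity
    have : δ + ((j : ℝ) + j) * δ + ((j : ℝ) + j) * δ = (4 * j + 1) * δ := by ring
    rw [this, hδdef, mul_div_cancel₀ _ h41.ne']
  -- Step 2: monotone convergence
  have hsup : ∀ q : X × Y,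
      (⨆ j : ℕ, ENNReal.ofReal (FApp c x₀ y₀ j q)) = ENNReal.ofReal (c q.1 q.2) := by
    intro q
    have hmono' : Monotone fun j : ℕ => ENNReal.ofReal (FApp c x₀ y₀ j q) :=
      fun a b hab => ENNReal.ofReal_le_ofReal (FApp_mono hc_nonneg hab)
    have hlim : Tendsto (fun j : ℕ => ENNReal.ofReal (FApp c x₀ y₀ j q)) atTop
        (𝓝 (ENNReal.ofReal (c q.1 q.2))) :=
      (ENNReal.continuous_ofReal.tendsto _).comp (FApp_tendsto hc_cont hc_nonneg)
    exact tendsto_nhds_unique (tendsto_atTop_iSup hmono') hlim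
  calc ∫⁻ q, ENNReal.ofReal (c q.1 q.2) ∂((μ : Measure X).prod ν)
      = ∫⁻ q, ⨆ j : ℕ, ENNReal.ofReal (FApp c x₀ y₀ j q) ∂((μ : Measure X).prod ν) :=
        (lintegral_congr fun q => (hsup q).symm)
    _ = ⨆ j : ℕ, ∫⁻ q, ENNReal.ofReal (FApp c x₀ y₀ j q) ∂((μ : Measure X).prod ν) := by
        apply lintegral_iSup
        · exact fun j => (hFcont j).measurable.ennreal_ofReal
        · exact fun a b hab q => ENNReal.ofReal_le_ofReal (FApp_mono hc_nonneg hab)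
    _ ≤ M := iSup_le key
end
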